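/- arXiv:math/0206161 — 3 statements merged into one kernel-verified Lean document; each statement's English description precedes it below -/
import Mathlib

section
/- For every integer n > 0 there exists a semialgebraic function h : P_n → ℚ_p such that |h(t)| = |t|^{1/n} for every t ∈ P_n (equivalently, v(h(t)) = v(t)/n for every t ∈ P_n). -/
open Filter MeasureTheory
open scoped ENNReal

namespace PadicSub

variable (p : ℕ) [Fact p.Prime]

/-- The coefficients (indexed by multi-indices) of a restricted power series:
they tend to `0` along the cofinite filter. -/
def IsRestrictedCoeffs {m : ℕ} (a : (Fin m → ℕ) → ℚ_[p]) : Prop :=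
  Filter.Tendsto a Filter.cofinite (nhds 0)

/-- The restricted analytic function associated to a family of coefficients:
the sum of the power series on `ℤ_p^m`, and `0` outside `ℤ_p^m`. -/
noncomputable def ranalFn {m : ℕ} (a : (Fin m → ℕ) → ℚ_[p]) (x : Fin m → ℚ_[p]) : ℚ_[p] :=
  if ∀ j, ‖x j‖ ≤ 1 then ∑' i : (Fin m → ℕ), a i * ∏ j, x j ^ i j else 0

/-- `D`-functions: the functions obtained from restricted analytic functions, polynomial
maps, and the inverse function (with the convention `0⁻¹ = 0`) by repeated composition. -/
inductive IsDFunction : {m : ℕ} → ((Fin m → ℚ_[p]) → ℚ_[p]) → Prop where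
  | ranal {m : ℕ} (a : (Fin m → ℕ) → ℚ_[p]) (ha : IsRestrictedCoeffs p a) :
      IsDFunction (ranalFn p a)
  | poly {m : ℕ} (q : MvPolynomial (Fin m) ℚ_[p]) :
      IsDFunction (fun x => MvPolynomial.eval x q)
  | inv : IsDFunction (fun x : Fin 1 → ℚ_[p] => (x 0)⁻¹)
  | comp {m n : ℕ} (f : (Fin n → ℚ_[p]) → ℚ_[p]) (g : Fin n → (Fin m → ℚ_[p]) → ℚ_[p]) :
      IsDFunction f → (∀ i, IsDFunction (g i)) →
      IsDFunction (fun x => f (fun i => g i x))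

/-- `P_n`: the set of nonzero `n`-th powers in `ℚ_p`. -/
def Pset (n : ℕ) : Set ℚ_[p] := {x | ∃ y : ℚ_[p], y ≠ 0 ∧ y ^ n = x}

/-- The coset `μ P_n`. -/
def cosetP (μ : ℚ_[p]) (n : ℕ) : Set ℚ_[p] := {x | ∃ y ∈ Pset p n, x = μ * y}

/-- A (globally) subanalytic subset of `ℚ_p^m`: a finite union of finite intersections of
sets of the form `{x | f x = 0}` and `{x | f x ∈ P_n}`, `f` a `D`-function, `n > 0`. -/
def IsSubanalytic {m : ℕ} (X : Set (Fin m → ℚ_[p])) : Prop :=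
  ∃ (r s : ℕ) (F : Fin r → Fin s → Set (Fin m → ℚ_[p])),
    (∀ i j, (∃ f, IsDFunction p f ∧ F i j = {x | f x = 0}) ∨
            (∃ f n, IsDFunction p f ∧ 0 < n ∧ F i j = {x | f x ∈ Pset p n})) ∧
    X = ⋃ i, ⋂ j, F i j

/-- A semialgebraic subset of `ℚ_p^m`: a finite union of finite intersections of
sets of the form `{x | f x = 0}` and `{x | f x ∈ P_n}`, `f` a polynomial, `n > 0`. -/
def IsSemialgebraic {m : ℕ} (X : Set (Fin m → ℚ_[p])) : Prop :=
  ∃ (r s : ℕ) (F : Fin r → Fin s → Set (Fin m → ℚ_[p])),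
    (∀ i j, (∃ f : MvPolynomial (Fin m) ℚ_[p], F i j = {x | MvPolynomial.eval x f = 0}) ∨
            (∃ (f : MvPolynomial (Fin m) ℚ_[p]) (n : ℕ), 0 < n ∧
              F i j = {x | MvPolynomial.eval x f ∈ Pset p n})) ∧
    X = ⋃ i, ⋂ j, F i j

/-- The graph of the restriction to `X` of a map `ℚ_p^m → ℚ_p^n`, inside `ℚ_p^(m+n)`. -/
def graphMap {m n : ℕ} (X : Set (Fin m → ℚ_[p])) (F : (Fin m → ℚ_[p]) → (Fin n → ℚ_[p])) :
    Set (Fin (m + n) → ℚ_[p]) :=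
  {z | (fun i => z (Fin.castAdd n i)) ∈ X ∧
    F (fun i => z (Fin.castAdd n i)) = fun j => z (Fin.natAdd m j)}

/-- The graph of the restriction to `X` of a function `ℚ_p^m → ℚ_p`, inside `ℚ_p^(m+1)`. -/
def graphFun {m : ℕ} (X : Set (Fin m → ℚ_[p])) (f : (Fin m → ℚ_[p]) → ℚ_[p]) :
    Set (Fin (m + 1) → ℚ_[p]) :=
  {z | (fun i : Fin m => z i.castSucc) ∈ X ∧ f (fun i : Fin m => z i.castSucc) = z (Fin.last m)}

/-- A function `ℚ_p^m → ℚ_p` is subanalytic on `X` if its graph over `X` is subanalytic. -/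
def IsSubanalyticFnOn {m : ℕ} (X : Set (Fin m → ℚ_[p])) (f : (Fin m → ℚ_[p]) → ℚ_[p]) : Prop :=
  IsSubanalytic p (graphFun p X f)

/-- A (totally defined) subanalytic function `ℚ_p^m → ℚ_p`. -/
def IsSubanalyticFn {m : ℕ} (f : (Fin m → ℚ_[p]) → ℚ_[p]) : Prop :=
  IsSubanalyticFnOn p Set.univ f

/-- A function `ℚ_p^m → ℚ_p` is semialgebraic on `X` if its graph over `X` is
semialgebraic. -/
def IsSemialgebraicFnOn {m : ℕ} (X : Set (Fin m → ℚ_[p])) (f : (Fin m → ℚ_[p]) → ℚ_[p]) :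
    Prop :=
  IsSemialgebraic p (graphFun p X f)

/-- A subanalytic subset of `ℚ_p` (one-variable version). -/
def IsSubanalytic1 (X : Set ℚ_[p]) : Prop :=
  IsSubanalytic p {z : Fin 1 → ℚ_[p] | z 0 ∈ X}

/-- A semialgebraic subset of `ℚ_p` (one-variable version). -/
def IsSemialgebraic1 (X : Set ℚ_[p]) : Prop :=
  IsSemialgebraic p {z : Fin 1 → ℚ_[p] | z 0 ∈ X}

/-- A function `ℚ_p → ℚ_p` subanalytic on `X ⊆ ℚ_p`: its graph over `X` is a subanalytic
subset of `ℚ_p²`. -/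
def IsSubanalyticFnOn1 (X : Set ℚ_[p]) (f : ℚ_[p] → ℚ_[p]) : Prop :=
  IsSubanalytic p {z : Fin 2 → ℚ_[p] | z 0 ∈ X ∧ f (z 0) = z 1}

/-- A function `ℚ_p → ℚ_p` semialgebraic on `X ⊆ ℚ_p`: its graph over `X` is a
semialgebraic subset of `ℚ_p²`. -/
def IsSemialgebraicFnOn1 (X : Set ℚ_[p]) (f : ℚ_[p] → ℚ_[p]) : Prop :=
  IsSemialgebraic p {z : Fin 2 → ℚ_[p] | z 0 ∈ X ∧ f (z 0) = z 1}

/-- Interpretation of the symbols `□ᵢ` in the definition of cells: `true` means `<` and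
`false` means "no condition". -/
def sqRel (b : Bool) (x y : ℝ) : Prop := b = true → x < y

/-- A cell in `ℚ_p`, presented with its center `γ` and coset data `μ`, `n`. -/
def IsCell1 (A : Set ℚ_[p]) (γ μ : ℚ_[p]) (n : ℕ) : Prop :=
  0 < n ∧ A.Nonempty ∧
  ∃ (α β : ℚ_[p]) (b₁ b₂ : Bool), α ≠ 0 ∧ β ≠ 0 ∧
    A = {t | sqRel b₁ ‖α‖ ‖t - γ‖ ∧ sqRel b₂ ‖t - γ‖ ‖β‖ ∧ t - γ ∈ cosetP p μ n}

/-- Subanalytic cells in `ℚ_p^(m+1)`, defined inductively, presented with their center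
`γ : ℚ_p^m → ℚ_p` and coset data `μ`, `n`.  The projection of the cell onto the first `m`
coordinates is required to be a cell. -/
inductive IsCell : {m : ℕ} → Set (Fin (m + 1) → ℚ_[p]) →
    ((Fin m → ℚ_[p]) → ℚ_[p]) → ℚ_[p] → ℕ → Prop where
  | base (n : ℕ) (hn : 0 < n) (μ γ0 α β : ℚ_[p]) (hα : α ≠ 0) (hβ : β ≠ 0)
      (b₁ b₂ : Bool) (A : Set (Fin 1 → ℚ_[p])) (hne : A.Nonempty)
      (hA : A = {z | sqRel b₁ ‖α‖ ‖z 0 - γ0‖ ∧ sqRel b₂ ‖z 0 - γ0‖ ‖β‖ ∧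
        z 0 - γ0 ∈ cosetP p μ n}) :
      IsCell A (fun _ => γ0) μ n
  | succ {m : ℕ} {D : Set (Fin (m + 1) → ℚ_[p])} {γD : (Fin m → ℚ_[p]) → ℚ_[p]}
      {μD : ℚ_[p]} {nD : ℕ} (hD : IsCell D γD μD nD)
      (n : ℕ) (hn : 0 < n) (μ : ℚ_[p]) (α β γ : (Fin (m + 1) → ℚ_[p]) → ℚ_[p])
      (hα : IsSubanalyticFn p α) (hβ : IsSubanalyticFn p β) (hγ : IsSubanalyticFn p γ)
      (hα0 : ∀ x, α x ≠ 0) (hβ0 : ∀ x, β x ≠ 0)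
      (b₁ b₂ : Bool) (A : Set (Fin (m + 2) → ℚ_[p]))
      (hA : A = {z | (fun i : Fin (m + 1) => z i.castSucc) ∈ D ∧
          sqRel b₁ ‖α (fun i : Fin (m + 1) => z i.castSucc)‖
            ‖z (Fin.last (m + 1)) - γ (fun i : Fin (m + 1) => z i.castSucc)‖ ∧
          sqRel b₂ ‖z (Fin.last (m + 1)) - γ (fun i : Fin (m + 1) => z i.castSucc)‖
            ‖β (fun i : Fin (m + 1) => z i.castSucc)‖ ∧
          z (Fin.last (m + 1)) - γ (fun i : Fin (m + 1) => z i.castSucc) ∈ cosetP p μ n})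
      (hproj : (fun (z : Fin (m + 2) → ℚ_[p]) (i : Fin (m + 1)) => z i.castSucc) '' A = D) :
      IsCell A γ μ n

/-- Analytic cells in `ℚ_p^(m+1)`: as subanalytic cells, but at each stage of the inductive
definition the functions `α`, `β`, `γ` are moreover analytic on the projection of the cell. -/
inductive IsAnalyticCell : {m : ℕ} → Set (Fin (m + 1) → ℚ_[p]) →
    ((Fin m → ℚ_[p]) → ℚ_[p]) → ℚ_[p] → ℕ → Prop where
  | base (n : ℕ) (hn : 0 < n) (μ γ0 α β : ℚ_[p]) (hα : α ≠ 0) (hβ : β ≠ 0)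
      (b₁ b₂ : Bool) (A : Set (Fin 1 → ℚ_[p])) (hne : A.Nonempty)
      (hA : A = {z | sqRel b₁ ‖α‖ ‖z 0 - γ0‖ ∧ sqRel b₂ ‖z 0 - γ0‖ ‖β‖ ∧
        z 0 - γ0 ∈ cosetP p μ n}) :
      IsAnalyticCell A (fun _ => γ0) μ n
  | succ {m : ℕ} {D : Set (Fin (m + 1) → ℚ_[p])} {γD : (Fin m → ℚ_[p]) → ℚ_[p]}
      {μD : ℚ_[p]} {nD : ℕ} (hD : IsAnalyticCell D γD μD nD)
      (n : ℕ) (hn : 0 < n) (μ : ℚ_[p]) (α β γ : (Fin (m + 1) → ℚ_[p]) → ℚ_[p])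
      (hα : IsSubanalyticFn p α) (hβ : IsSubanalyticFn p β) (hγ : IsSubanalyticFn p γ)
      (hαan : AnalyticOn ℚ_[p] α D) (hβan : AnalyticOn ℚ_[p] β D)
      (hγan : AnalyticOn ℚ_[p] γ D)
      (hα0 : ∀ x, α x ≠ 0) (hβ0 : ∀ x, β x ≠ 0)
      (b₁ b₂ : Bool) (A : Set (Fin (m + 2) → ℚ_[p]))
      (hA : A = {z | (fun i : Fin (m + 1) => z i.castSucc) ∈ D ∧
          sqRel b₁ ‖α (fun i : Fin (m + 1) => z i.castSucc)‖
            ‖z (Fin.last (m + 1)) - γ (fun i : Fin (m + 1) => z i.castSucc)‖ ∧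
          sqRel b₂ ‖z (Fin.last (m + 1)) - γ (fun i : Fin (m + 1) => z i.castSucc)‖
            ‖β (fun i : Fin (m + 1) => z i.castSucc)‖ ∧
          z (Fin.last (m + 1)) - γ (fun i : Fin (m + 1) => z i.castSucc) ∈ cosetP p μ n})
      (hproj : (fun (z : Fin (m + 2) → ℚ_[p]) (i : Fin (m + 1)) => z i.castSucc) '' A = D) :
      IsAnalyticCell A γ μ n

/-- Generators of the algebra of subanalytic constructible functions on `ℚ_p^m`:
`ℤ`-valued valuations of nonvanishing subanalytic functions, and (`ℚ`-valued) norms of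
subanalytic functions. -/
def constructibleGens (m : ℕ) : Set ((Fin m → ℚ_[p]) → ℚ) :=
  {g | ∃ h : (Fin m → ℚ_[p]) → ℚ_[p], IsSubanalyticFn p h ∧ (∀ x, h x ≠ 0) ∧
        g = fun x => ((h x).valuation : ℚ)} ∪
  {g | ∃ h : (Fin m → ℚ_[p]) → ℚ_[p], IsSubanalyticFn p h ∧
        g = fun x => (padicNormE (h x) : ℚ)}

/-- The `ℚ`-algebra `C(ℚ_p^m)` of subanalytic constructible functions on `ℚ_p^m`. -/
noncomputable def ConstructibleAlg (m : ℕ) : Subalgebra ℚ ((Fin m → ℚ_[p]) → ℚ) :=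
  Algebra.adjoin ℚ (constructibleGens p m)

/-- `ℤ_p^m` as a subset of `ℚ_p^m`. -/
def ZpSet (m : ℕ) : Set (Fin m → ℚ_[p]) := {x | ∀ j, ‖x j‖ ≤ 1}

/-- A simple subset of `ℤ^n × ℚ_p^m`. -/
def IsSimpleSet (n m : ℕ) (A : Set ((Fin n → ℤ) × (Fin m → ℚ_[p]))) : Prop :=
  IsSubanalytic p {z : Fin (n + m) → ℚ_[p] |
    (∀ i : Fin n, z (Fin.castAdd m i) ≠ 0) ∧
    ((fun i : Fin n => (z (Fin.castAdd m i)).valuation),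
      fun j : Fin m => z (Fin.natAdd n j)) ∈ A}

/-- A simple function `ℤ^n × ℚ_p^m → ℤ`: one whose graph is a simple set. -/
def IsSimpleFn (n m : ℕ) (h : (Fin n → ℤ) × (Fin m → ℚ_[p]) → ℤ) : Prop :=
  IsSimpleSet p (n + 1) m
    {w | w.1 (Fin.last n) = h (fun i : Fin n => w.1 i.castSucc, w.2)}

/-- Generators of `C_simple(ℤ^n × ℚ_p^m)`: simple functions, and `p^h` for `h` simple. -/
def simpleGens (n m : ℕ) : Set ((Fin n → ℤ) × (Fin m → ℚ_[p]) → ℚ) :=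
  {g | ∃ h, IsSimpleFn p n m h ∧ g = fun w => (h w : ℚ)} ∪
  {g | ∃ h, IsSimpleFn p n m h ∧ g = fun w => (p : ℚ) ^ (h w)}

/-- The `ℚ`-algebra `C_simple(ℤ^n × ℚ_p^m)`. -/
noncomputable def SimpleAlg (n m : ℕ) : Subalgebra ℚ ((Fin n → ℤ) × (Fin m → ℚ_[p]) → ℚ) :=
  Algebra.adjoin ℚ (simpleGens p n m)

noncomputable instance : MeasurableSpace ℚ_[p] := borel _
instance : BorelSpace ℚ_[p] := ⟨rfl⟩

end PadicSub


namespace PadicNthRootAux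

open Finset

variable {p : ℕ} [hp : Fact p.Prime]


lemma binom_tail (u : ℚ_[p]) (m : ℕ) (hm : 1 ≤ m) :
    (1+u)^m - 1 - m*u = ∑ k ∈ Ico 2 (m+1), u^k * (m.choose k : ℚ_[p]) := by
  have h1 : (1+u)^m = ∑ k ∈ range (m+1), u^k * (m.choose k : ℚ_[p]) := by
    rw [add_comm]; simpa using add_pow u 1 m
  have h2 : ∑ k ∈ range 2, u^k * (m.choose k : ℚ_[p]) + ∑ k ∈ Ico 2 (m+1), u^k * (m.choose k : ℚ_[p])
      = ∑ k ∈ range (m+1), u^k * (m.choose k : ℚ_[p]) :=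
    Finset.sum_range_add_sum_Ico _ (by omega)
  have h3 : ∑ k ∈ range 2, u^k * (m.choose k : ℚ_[p]) = 1 + m*u := by
    simp [Finset.sum_range_succ, mul_comm]
  rw [h1, ← h2, h3]; ring

lemma lemB {u : ℚ_[p]} (hu : ‖u‖ ≤ (p:ℝ)^(-2 : ℤ)) :
    ‖(1+u)^p - 1‖ = (p:ℝ)⁻¹ * ‖u‖ := by
  have hp1 : (1:ℝ) < p := by exact_mod_cast hp.out.one_lt
  have hIpos : (0:ℝ) < (p:ℝ)⁻¹ := by positivity
  have hIlt : (p:ℝ)⁻¹ < 1 := inv_lt_one_of_one_lt₀ hp1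
  have h2 : ((p:ℝ)^(-2:ℤ)) = (p:ℝ)⁻¹ * (p:ℝ)⁻¹ := by
    rw [zpow_neg, zpow_two, mul_inv]
  rw [h2] at hu
  rcases eq_or_ne u 0 with rfl | hu0
  · simp
  have hupos : 0 < ‖u‖ := norm_pos_iff.mpr hu0
  have hule : ‖u‖ ≤ 1 := le_trans hu (by nlinarith)
  have hterm : ∀ k ∈ Ico 2 (p+1), ‖u^k * (p.choose k : ℚ_[p])‖ ≤ (p:ℝ)⁻¹ * (p:ℝ)⁻¹ * ‖u‖ := by
    intro k hk
    simp only [Finset.mem_Ico] at hk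
    have hk2 : 2 ≤ k := hk.1
    have hkp : k ≤ p := by omega
    have husq : ‖u‖^k ≤ ‖u‖^2 := pow_le_pow_of_le_one (norm_nonneg u) hule hk2
    have husq2 : ‖u‖^2 ≤ ((p:ℝ)⁻¹ * (p:ℝ)⁻¹) * ‖u‖ := by rw [sq]; nlinarith
    rcases eq_or_lt_of_le hkp with heq | hklt
    · rw [heq, Nat.choose_self]
      push_cast
      rw [mul_one, norm_pow]
      calc ‖u‖^p ≤ ‖u‖^2 := heq ▸ husq
        _ ≤ _ := husq2
    · have hdvd : p ∣ p.choose k := hp.out.dvd_choose_self (by omega) hklt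
      have hnc : ‖(p.choose k : ℚ_[p])‖ ≤ (p:ℝ)⁻¹ := by
        have hd : ((p:ℤ)^1) ∣ (p.choose k : ℤ) := by
          rw [pow_one]; exact_mod_cast hdvd
        have := (Padic.norm_int_le_pow_iff_dvd (p := p) (p.choose k : ℤ) 1).mpr hd
        simpa using this
      calc ‖u^k * (p.choose k : ℚ_[p])‖ = ‖u‖^k * ‖(p.choose k : ℚ_[p])‖ := by
            rw [norm_mul, norm_pow]
        _ ≤ ‖u‖^2 * (p:ℝ)⁻¹ := by gcongr
        _ ≤ ((p:ℝ)⁻¹ * (p:ℝ)⁻¹) * ‖u‖ := by nlinarith [sq_nonneg ‖u‖]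
  have hR : ‖(1+u)^p - 1 - p*u‖ ≤ (p:ℝ)⁻¹ * (p:ℝ)⁻¹ * ‖u‖ := by
    rw [binom_tail u p hp.out.one_lt.le]
    exact IsUltrametricDist.norm_sum_le_of_forall_le_of_nonneg (by positivity) hterm
  have hpu : ‖(p : ℚ_[p]) * u‖ = (p:ℝ)⁻¹ * ‖u‖ := by
    rw [norm_mul, Padic.norm_p]
  have hRlt : ‖(1+u)^p - 1 - p*u‖ < ‖(p : ℚ_[p]) * u‖ := by
    rw [hpu]; calc ‖(1+u)^p - 1 - p*u‖ ≤ (p:ℝ)⁻¹ * (p:ℝ)⁻¹ * ‖u‖ := hR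
      _ < (p:ℝ)⁻¹ * ‖u‖ := by
          have h3 : (p:ℝ)⁻¹ * (p:ℝ)⁻¹ < (p:ℝ)⁻¹ := by nlinarith
          exact mul_lt_mul_of_pos_right h3 hupos
  have hsplit : (1+u)^p - 1 = (p : ℚ_[p])*u + ((1+u)^p - 1 - p*u) := by ring
  rw [hsplit, Padic.add_eq_max_of_ne (ne_of_gt hRlt), max_eq_left hRlt.le, hpu]

lemma norm_nat_eq_one_of_not_dvd {m : ℕ} (h : ¬ p ∣ m) : ‖(m : ℚ_[p])‖ = 1 := by
  have h1 := Padic.norm_intCast_lt_one_iff (p := p) (k := (m : ℤ))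
  have h2 : ‖((m:ℤ) : ℚ_[p])‖ ≤ 1 := Padic.norm_int_le_one _
  rcases lt_or_eq_of_le h2 with h3 | h3
  · exact absurd (by exact_mod_cast h1.mp h3) h
  · exact_mod_cast h3

lemma lemA {u : ℚ_[p]} (hu : ‖u‖ < 1) {m : ℕ} (hm : ¬ p ∣ m) (hm1 : 1 ≤ m) :
    ‖(1+u)^m - 1‖ = ‖u‖ := by
  rcases eq_or_ne u 0 with rfl | hu0
  · simp
  have hupos : 0 < ‖u‖ := norm_pos_iff.mpr hu0
  have hR : ‖(1+u)^m - 1 - m*u‖ ≤ ‖u‖^2 := by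
    rw [binom_tail u m hm1]
    apply IsUltrametricDist.norm_sum_le_of_forall_le_of_nonneg (by positivity)
    intro k hk
    simp only [Finset.mem_Ico] at hk
    calc ‖u^k * (m.choose k : ℚ_[p])‖ ≤ ‖u^k‖ * 1 := by
          rw [norm_mul]
          gcongr
          exact_mod_cast Padic.norm_int_le_one (m.choose k : ℤ)
      _ = ‖u‖^k := by rw [mul_one, norm_pow]
      _ ≤ ‖u‖^2 := pow_le_pow_of_le_one (norm_nonneg u) hu.le hk.1
  have hmu : ‖(m : ℚ_[p]) * u‖ = ‖u‖ := by
    rw [norm_mul, norm_nat_eq_one_of_not_dvd hm, one_mul]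
  have hRlt : ‖(1+u)^m - 1 - m*u‖ < ‖(m : ℚ_[p]) * u‖ := by
    rw [hmu]
    calc ‖(1+u)^m - 1 - m*u‖ ≤ ‖u‖^2 := hR
      _ < ‖u‖ := by nlinarith
  have hsplit : (1+u)^m - 1 = (m : ℚ_[p])*u + ((1+u)^m - 1 - m*u) := by ring
  rw [hsplit, Padic.add_eq_max_of_ne (ne_of_gt hRlt), max_eq_left hRlt.le, hmu]

/-- The ball `‖z - 1‖ ≤ p⁻²` is torsion-free. -/
lemma torsion_free (z : ℚ_[p]) (hz : ‖z - 1‖ ≤ (p:ℝ)^(-2 : ℤ)) :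
    ∀ m : ℕ, 0 < m → z^m = 1 → z = 1 := by
  have hp1 : (1:ℝ) < p := by exact_mod_cast hp.out.one_lt
  have hIpos : (0:ℝ) < (p:ℝ)⁻¹ := by positivity
  have hsmall : ((p:ℝ)^(-2:ℤ)) < 1 := by
    rw [zpow_neg, zpow_two]
    exact inv_lt_one_of_one_lt₀ (by nlinarith)
  intro m
  induction m using Nat.strong_induction_on generalizing z with
  | _ m ih =>
    intro hm hzm
    by_cases hpm : p ∣ m
    · obtain ⟨m', rfl⟩ := hpm
      have hm' : 0 < m' := Nat.pos_of_ne_zero (fun h => by simp [h] at hm)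
      have hm'lt : m' < p * m' := by
        have := hp.out.one_lt; nlinarith
      -- z^p is in the ball and (z^p)^m' = 1
      have hzp : ‖z^p - 1‖ = (p:ℝ)⁻¹ * ‖z - 1‖ := by
        have := lemB (p := p) (u := z - 1) hz
        simpa using this
      have hzp_ball : ‖z^p - 1‖ ≤ (p:ℝ)^(-2:ℤ) := by
        rw [hzp]
        calc (p:ℝ)⁻¹ * ‖z - 1‖ ≤ 1 * ‖z-1‖ := by
              apply mul_le_mul_of_nonneg_right (by linarith [inv_lt_one_of_one_lt₀ hp1]) (norm_nonneg _)
          _ ≤ (p:ℝ)^(-2:ℤ) := by rw [one_mul]; exact hz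
      have hzpm : (z^p)^m' = 1 := by rw [← pow_mul]; exact hzm
      have h1 : z^p = 1 := ih m' hm'lt (z^p) hzp_ball hm' hzpm
      -- then ‖z - 1‖ = 0
      have : (p:ℝ)⁻¹ * ‖z - 1‖ = 0 := by rw [← hzp, h1]; simp
      have : ‖z - 1‖ = 0 := by
        rcases mul_eq_zero.mp this with h | h
        · linarith
        · exact h
      exact sub_eq_zero.mp (norm_eq_zero.mp this)
    · -- coprime case
      have := lemA (p := p) (u := z - 1) (lt_of_le_of_lt hz hsmall) hpm hm
      rw [show (1 : ℚ_[p]) + (z-1) = z by ring] at this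
      rw [hzm, sub_self, norm_zero] at this
      have := (norm_eq_zero.mp this.symm)
      exact sub_eq_zero.mp this



lemma norm_one_of_torsion {z : ℚ_[p]} {m : ℕ} (hm : 0 < m) (hzm : z^m = 1) : ‖z‖ = 1 := by
  have h : ‖z‖^m = 1 := by rw [← norm_pow, hzm, norm_one]
  rcases lt_trichotomy ‖z‖ 1 with hlt | heq | hgt
  · have := pow_lt_one₀ (norm_nonneg z) hlt (by omega : m ≠ 0); linarith
  · exact heq
  · have := one_lt_pow₀ hgt (by omega : m ≠ 0); linarith

/-- There is a uniform exponent killing all torsion of `ℚ_p^×`. -/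
lemma exists_exponent : ∃ e : ℕ, 0 < e ∧
    ∀ z : ℚ_[p], ∀ m : ℕ, 0 < m → z^m = 1 → z^e = 1 := by
  haveI : NeZero (p^2) := ⟨pow_ne_zero _ hp.out.ne_zero⟩
  refine ⟨Fintype.card (ZMod (p^2))ˣ, Fintype.card_pos, ?_⟩
  intro z m hm hzm
  set e := Fintype.card (ZMod (p^2))ˣ with he
  have hz1 : ‖z‖ = 1 := norm_one_of_torsion hm hzm
  set w : ℤ_[p] := ⟨z, le_of_eq hz1⟩ with hw
  have hwu : IsUnit w := PadicInt.isUnit_iff.mpr (by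
    rw [← PadicInt.padic_norm_e_of_padicInt]; exact hz1)
  obtain ⟨W, hW⟩ := hwu
  have hmap : ((PadicInt.toZModPow 2) (w^e)) = 1 := by
    have : ((PadicInt.toZModPow (p := p) 2).toMonoidHom.comp (Units.coeHom ℤ_[p]) W)^e
        = ((Units.map (PadicInt.toZModPow (p := p) 2).toMonoidHom W : (ZMod (p^2))ˣ) : ZMod (p^2))^e := by
      simp
    have h2 : ((Units.map (PadicInt.toZModPow (p := p) 2).toMonoidHom W) : (ZMod (p^2))ˣ)^e = 1 :=
      pow_card_eq_one
    calc (PadicInt.toZModPow 2) (w^e) = ((PadicInt.toZModPow 2) w)^e := by rw [map_pow]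
      _ = (((Units.map (PadicInt.toZModPow (p := p) 2).toMonoidHom W) : (ZMod (p^2))ˣ) : ZMod (p^2))^e := by
          rw [← hW]; rfl
      _ = ((((Units.map (PadicInt.toZModPow (p := p) 2).toMonoidHom W)^e : (ZMod (p^2))ˣ)) : ZMod (p^2)) := by
          rw [Units.val_pow_eq_pow_val]
      _ = 1 := by rw [h2]; rfl
  have hker : w^e - 1 ∈ RingHom.ker (PadicInt.toZModPow (p := p) 2) := by
    rw [RingHom.mem_ker, map_sub, hmap, map_one, sub_self]
  rw [PadicInt.ker_toZModPow] at hker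
  have hnorm : ‖w^e - 1‖ ≤ (p:ℝ)^(-(2:ℕ) : ℤ) := by
    rw [PadicInt.norm_le_pow_iff_mem_span_pow]
    exact hker
  have hnormQ : ‖z^e - 1‖ ≤ (p:ℝ)^(-2 : ℤ) := by
    have hcoe : ((w^e - 1 : ℤ_[p]) : ℚ_[p]) = z^e - 1 := by
      push_cast [hw]
      rfl
    rw [← hcoe, PadicInt.padic_norm_e_of_padicInt]
    exact_mod_cast hnorm
  have hze : (z^e)^m = 1 := by rw [← pow_mul, mul_comm, pow_mul, hzm, one_pow]
  exact torsion_free (z^e) hnormQ m hm hze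

lemma norm_nat_N (N : ℕ) (hN : 0 < N) :
    ‖(N : ℚ_[p])‖ = (p:ℝ)^(-(padicValNat p N) : ℤ) := by
  set v := padicValNat p N with hv
  have hfact : p ^ v * (N / p ^ v) = N := by
    have := Nat.ordProj_mul_ordCompl_eq_self N p
    simpa [hv, Nat.factorization_def _ hp.out] using this
  have hnd : ¬ p ∣ (N / p ^ v) := by
    have := Nat.not_dvd_ordCompl hp.out hN.ne'
    simpa [hv, Nat.factorization_def _ hp.out] using this
  calc ‖(N : ℚ_[p])‖ = ‖((p:ℚ_[p])^v * ((N / p^v : ℕ) : ℚ_[p]))‖ := by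
        rw [← Nat.cast_pow, ← Nat.cast_mul, hfact]
    _ = (p:ℝ)^(-(v:ℤ)) := by
        rw [norm_mul, Padic.norm_p_pow, norm_nat_eq_one_of_not_dvd hnd, mul_one]

/-- Elements close to 1 are N-th powers (Hensel). -/
lemma mem_pow_of_close (N : ℕ) (hN : 0 < N) {w : ℚ_[p]}
    (hw : ‖w - 1‖ ≤ (p:ℝ)^(-(2 * (padicValNat p N) + 1) : ℤ)) :
    ∃ y : ℚ_[p], y ≠ 0 ∧ y^N = w := by
  have hp1 : (1:ℝ) < p := by exact_mod_cast hp.out.one_lt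
  set v := padicValNat p N with hv
  have hlt1 : ((p:ℝ)^(-(2*v+1) : ℤ)) < 1 := by
    apply zpow_lt_one_of_neg₀ hp1 <;> omega
  have hw1 : ‖w‖ = 1 := by
    have : w = 1 + (w - 1) := by ring
    have hlt : ‖w - 1‖ < 1 := lt_of_le_of_lt hw hlt1
    rw [this, Padic.add_eq_max_of_ne (by rw [norm_one]; exact ne_of_gt hlt),
      max_eq_left (by rw [norm_one]; exact hlt.le), norm_one]
  have hwne : w ≠ 0 := fun h => by simp [h] at hw1
  set wZ : ℤ_[p] := ⟨w, le_of_eq hw1⟩ with hwZ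
  set F : Polynomial ℤ_[p] := Polynomial.X^N - Polynomial.C wZ with hF
  have heval : F.eval 1 = 1 - wZ := by simp [hF]
  have hderiv : F.derivative.eval 1 = (N : ℤ_[p]) := by
    simp [hF, Polynomial.derivative_X_pow]
  have hnormN : ‖(N : ℤ_[p])‖ = (p:ℝ)^(-(v:ℤ)) := by
    rw [← PadicInt.padic_norm_e_of_padicInt]
    push_cast
    exact norm_nat_N N hN
  have hnormEval : ‖F.eval 1‖ = ‖w - 1‖ := by
    rw [heval, ← PadicInt.padic_norm_e_of_padicInt]
    have : ((1 - wZ : ℤ_[p]) : ℚ_[p]) = 1 - w := by push_cast [hwZ]; rfl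
    rw [this, norm_sub_rev]
  have hmain : ‖F.eval 1‖ < ‖F.derivative.eval 1‖^2 := by
    rw [hnormEval, hderiv, hnormN]
    calc ‖w - 1‖ ≤ (p:ℝ)^(-(2*v+1) : ℤ) := hw
      _ < ((p:ℝ)^(-(v:ℤ)))^2 := by
          rw [← zpow_natCast ((p:ℝ)^(-(v:ℤ))), ← zpow_mul]
          apply zpow_lt_zpow_right₀ hp1
          push_cast; omega
  obtain ⟨zZ, hz0, -⟩ := hensels_lemma hmain
  have hzpow : zZ^N = wZ := by
    have := hz0
    simp [hF, sub_eq_zero] at this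
    exact this
  refine ⟨(zZ : ℚ_[p]), ?_, ?_⟩
  · intro h
    apply hwne
    have : ((zZ^N : ℤ_[p]) : ℚ_[p]) = w := by rw [hzpow]
    rw [← this]; push_cast [h]; try simp [hN.ne']
  · have : ((zZ^N : ℤ_[p]) : ℚ_[p]) = w := by rw [hzpow]
    rw [← this]; push_cast; try ring


lemma finite_quot (N : ℕ) (hN : 0 < N) :
    Finite (ℚ_[p]ˣ ⧸ (powMonoidHom N : ℚ_[p]ˣ →* ℚ_[p]ˣ).range) := by
  haveI : NeZero N := ⟨hN.ne'⟩
  set K := 2 * padicValNat p N + 1 with hK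
  haveI : NeZero (p^K) := ⟨pow_ne_zero _ hp.out.ne_zero⟩
  have hp0 : (p:ℚ_[p]) ≠ 0 := Nat.cast_ne_zero.mpr hp.out.ne_zero
  have hp1R : (1:ℝ) < p := by exact_mod_cast hp.out.one_lt
  classical
  set S := (powMonoidHom N : ℚ_[p]ˣ →* ℚ_[p]ˣ).range with hS
  set f : ZMod N × ZMod (p^K) → ℚ_[p]ˣ ⧸ S := fun ra =>
    if h : ((p:ℚ_[p])^(ra.1.val) * ((ra.2.val : ℕ) : ℚ_[p])) ≠ 0
    then QuotientGroup.mk (Units.mk0 _ h) else 1 with hf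
  apply Finite.of_surjective f
  intro q
  obtain ⟨x, rfl⟩ := QuotientGroup.mk_surjective q
  set xq : ℚ_[p] := (x : ℚ_[p]) with hxq
  have hxq0 : xq ≠ 0 := x.ne_zero
  set v : ℤ := xq.valuation with hv
  set u : ℚ_[p] := xq * (p:ℚ_[p])^(-v) with hu
  have hu0 : u ≠ 0 := mul_ne_zero hxq0 (zpow_ne_zero _ hp0)
  have hun : ‖u‖ = 1 := by
    rw [hu, norm_mul, Padic.norm_eq_zpow_neg_valuation hxq0, Padic.norm_p_zpow, ← hv,
      neg_neg, ← zpow_add₀ (ne_of_gt (by positivity : (0:ℝ) < (p:ℝ)))]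
    simp
  -- the digit part
  set uZ : ℤ_[p] := ⟨u, le_of_eq hun⟩ with huZ
  set a : ZMod (p^K) := PadicInt.toZModPow K uZ with ha
  set c : ℚ_[p] := ((a.val : ℕ) : ℚ_[p]) with hc
  have hdiff : ‖u - c‖ ≤ (p:ℝ)^(-(K:ℤ)) := by
    have hker : uZ - (a.val : ℤ_[p]) ∈ RingHom.ker (PadicInt.toZModPow (p := p) K) := by
      rw [RingHom.mem_ker, map_sub, map_natCast, ← ha, ZMod.natCast_val, ZMod.cast_id, sub_self]
    rw [PadicInt.ker_toZModPow] at hker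
    have := (PadicInt.norm_le_pow_iff_mem_span_pow _ K).mpr hker
    have hcoe : ((uZ - (a.val : ℤ_[p]) : ℤ_[p]) : ℚ_[p]) = u - c := by push_cast [huZ, hc]; rfl
    rw [← PadicInt.padic_norm_e_of_padicInt, hcoe] at this
    exact_mod_cast this
  have hKlt : ((p:ℝ)^(-(K:ℤ))) < 1 := by
    apply zpow_lt_one_of_neg₀ hp1R; omega
  have hcnorm : ‖c‖ = 1 := by
    have h1 : c = u + (c - u) := by ring
    rcases eq_or_ne (c - u) 0 with h0 | h0
    · rw [h1, h0, add_zero]; exact hun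
    · rw [h1, Padic.add_eq_max_of_ne, max_eq_left]
      · exact hun
      · rw [hun, norm_sub_rev]; exact le_of_lt (lt_of_le_of_lt hdiff hKlt)
      · rw [hun, norm_sub_rev]; exact ne_of_gt (lt_of_le_of_lt hdiff hKlt)
  have hc0 : c ≠ 0 := fun h => by simp [h] at hcnorm
  -- u / c is an N-th power
  have hquot : ‖u / c - 1‖ ≤ (p:ℝ)^(-(K:ℤ)) := by
    have : u / c - 1 = (u - c) / c := by field_simp
    rw [this, norm_div, hcnorm, div_one]
    exact hdiff
  obtain ⟨y, hy0, hyN⟩ := mem_pow_of_close (p := p) N hN (w := u / c) (by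
    rw [hK] at hquot
    exact_mod_cast hquot)
  -- assemble
  set q' : ℤ := v / N with hq'
  set r0 : ℕ := (v % N).toNat with hr0
  have hr0N : r0 < N := by
    have h1 : 0 ≤ v % N := Int.emod_nonneg v (by exact_mod_cast hN.ne')
    have h2 : v % N < N := Int.emod_lt_of_pos v (by exact_mod_cast hN)
    omega
  have hvsplit : v = N * q' + (r0 : ℤ) := by
    show v = N * (v / N) + ((v % N).toNat : ℤ)
    rw [Int.toNat_of_nonneg (Int.emod_nonneg v (by exact_mod_cast hN.ne'))]
    exact (Int.mul_ediv_add_emod v N).symm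
  refine ⟨((r0 : ZMod N), a), ?_⟩
  have hval : ((r0 : ZMod N)).val = r0 := by
    rw [ZMod.val_natCast, Nat.mod_eq_of_lt hr0N]
  have hcc : (p:ℚ_[p])^(((r0 : ZMod N)).val) * ((a.val : ℕ) : ℚ_[p]) ≠ 0 := by
    rw [hval]
    exact mul_ne_zero (pow_ne_zero _ hp0) hc0
  rw [hf]
  simp only [dif_pos hcc]
  -- show mk (mk0 (p^r0 * c)) = mk x
  rw [QuotientGroup.eq]
  set Yb : ℚ_[p] := (p:ℚ_[p])^q' * y with hYb
  have hYb0 : Yb ≠ 0 := mul_ne_zero (zpow_ne_zero _ hp0) hy0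
  refine ⟨Units.mk0 Yb hYb0, ?_⟩
  apply Units.ext
  have key : xq = ((p:ℚ_[p])^(((r0 : ZMod N)).val) * c) * Yb^N := by
    rw [hval, hYb, mul_pow, ← zpow_natCast ((p:ℚ_[p])^q'), ← zpow_mul]
    have hyc : c * y^N = u := by
      rw [hyN]; field_simp
    have hxu : xq = (p:ℚ_[p])^v * u := by
      rw [hu]
      rw [mul_comm ((p:ℚ_[p])^v), mul_assoc, ← zpow_add₀ hp0]
      simp
    rw [hxu, ← hyc, hvsplit, mul_comm q' (N:ℤ), zpow_add₀ hp0, zpow_natCast]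
    ring
  have final : Yb^N = ((p:ℚ_[p])^(((r0 : ZMod N)).val) * ((a.val : ℕ) : ℚ_[p]))⁻¹ * xq := by
    rw [key, ← hc]
    field_simp
  simp only [powMonoidHom_apply, Units.val_pow_eq_pow_val, Units.val_mul,
    Units.val_inv_eq_inv_val, Units.val_mk0]
  rw [← hxq]
  exact final

lemma exists_selector (n : ℕ) (hn : 0 < n) :
    ∃ (N : ℕ) (r : ℕ) (c : Fin r → ℚ_[p]), 0 < N ∧ (∀ i, c i ≠ 0) ∧
      ∀ y : ℚ_[p], y ≠ 0 → ∃! z : ℚ_[p],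
        z^n = y^n ∧ ∃ i : Fin r, ∃ w : ℚ_[p], w ≠ 0 ∧ z = c i * w^N := by
  obtain ⟨e, he, hexp⟩ := exists_exponent (p := p)
  set N := n * e with hNdef
  have hN : 0 < N := Nat.mul_pos hn he
  set S := (powMonoidHom N : ℚ_[p]ˣ →* ℚ_[p]ˣ).range with hS
  haveI : Finite (ℚ_[p]ˣ ⧸ S) := finite_quot N hN
  set μ : Subgroup ℚ_[p]ˣ := (powMonoidHom n : ℚ_[p]ˣ →* ℚ_[p]ˣ).ker with hμ
  set μb : Subgroup (ℚ_[p]ˣ ⧸ S) := Subgroup.map (QuotientGroup.mk' S) μ with hμb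
  haveI : Finite ((ℚ_[p]ˣ ⧸ S) ⧸ μb) := Quotient.finite _
  haveI : Fintype ((ℚ_[p]ˣ ⧸ S) ⧸ μb) := Fintype.ofFinite _
  set r := Fintype.card ((ℚ_[p]ˣ ⧸ S) ⧸ μb) with hr
  set enum : Fin r ≃ ((ℚ_[p]ˣ ⧸ S) ⧸ μb) := (Fintype.equivFin _).symm with henum
  set rep : ((ℚ_[p]ˣ ⧸ S) ⧸ μb) → ℚ_[p]ˣ := fun q => (Quotient.out q : ℚ_[p]ˣ ⧸ S).out
    with hrep
  set c : Fin r → ℚ_[p] := fun i => ((rep (enum i) : ℚ_[p]ˣ) : ℚ_[p]) with hc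
  have hrepmk : ∀ q : (ℚ_[p]ˣ ⧸ S) ⧸ μb,
      ((QuotientGroup.mk (rep q) : ℚ_[p]ˣ ⧸ S) : (ℚ_[p]ˣ ⧸ S) ⧸ μb) = q := by
    intro q
    rw [hrep]
    show ((QuotientGroup.mk (Quotient.out (Quotient.out q)) : ℚ_[p]ˣ ⧸ S) :
      (ℚ_[p]ˣ ⧸ S) ⧸ μb) = q
    rw [QuotientGroup.out_eq', QuotientGroup.out_eq']
  have μinj : ∀ ζ : ℚ_[p]ˣ, ζ ∈ μ → ζ ∈ S → ζ = 1 := by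
    intro ζ hζμ hζS
    obtain ⟨Y, hY⟩ := hζS
    rw [powMonoidHom_apply] at hY
    have hζn : ζ^n = 1 := hζμ
    have hYval : ((Y : ℚ_[p]))^(n * N) = 1 := by
      have h1 : ((Y^N : ℚ_[p]ˣ) : ℚ_[p]) = (ζ : ℚ_[p]) := by rw [hY]
      calc ((Y : ℚ_[p]))^(n * N) = (((Y : ℚ_[p]))^N)^n := by rw [← pow_mul, mul_comm]
        _ = ((ζ : ℚ_[p]))^n := by rw [← Units.val_pow_eq_pow_val, h1]
        _ = 1 := by rw [← Units.val_pow_eq_pow_val, hζn, Units.val_one]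
    have hYe : ((Y : ℚ_[p]))^e = 1 := hexp _ _ (Nat.mul_pos hn hN) hYval
    have hv : (ζ : ℚ_[p]) = 1 := by
      calc (ζ : ℚ_[p]) = ((Y : ℚ_[p]))^N := by
            rw [← hY, Units.val_pow_eq_pow_val]
        _ = (((Y : ℚ_[p]))^e)^n := by rw [← pow_mul, hNdef, mul_comm]
        _ = 1 := by rw [hYe, one_pow]
    exact Units.ext hv
  refine ⟨N, r, c, hN, fun i => Units.ne_zero _, ?_⟩
  intro y hy
  set yu : ℚ_[p]ˣ := Units.mk0 y hy with hyu
  have bridge : ∀ zu : ℚ_[p]ˣ,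
      ((∃ i : Fin r, ∃ w : ℚ_[p], w ≠ 0 ∧ (zu : ℚ_[p]) = c i * w^N) ↔
        ∃ i : Fin r, (QuotientGroup.mk zu : ℚ_[p]ˣ ⧸ S) = QuotientGroup.mk (rep (enum i))) := by
    intro zu
    constructor
    · rintro ⟨i, w, hw0, hwz⟩
      refine ⟨i, ?_⟩
      set wu : ℚ_[p]ˣ := Units.mk0 w hw0 with hwu
      have h1 : zu = rep (enum i) * wu^N := by
        apply Units.ext
        push_cast [hwz, hc]
        rfl
      have h2 : (QuotientGroup.mk (wu^N) : ℚ_[p]ˣ ⧸ S) = 1 := by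
        rw [QuotientGroup.eq_one_iff]
        exact ⟨wu, rfl⟩
      rw [h1, QuotientGroup.mk_mul, h2]
      first
        | exact mul_one ((QuotientGroup.mk (rep (enum i)) : ℚ_[p]ˣ ⧸ S))
        | simp only [mul_one]
        | group
    · rintro ⟨i, hi⟩
      rw [QuotientGroup.eq] at hi
      obtain ⟨W, hW⟩ := hi
      rw [powMonoidHom_apply] at hW
      refine ⟨i, ((W⁻¹ : ℚ_[p]ˣ) : ℚ_[p]), Units.ne_zero _, ?_⟩
      have h1 : zu = rep (enum i) * (W⁻¹)^N := by
        rw [inv_pow, hW]; group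
      calc (zu : ℚ_[p]) = ((rep (enum i) * (W⁻¹)^N : ℚ_[p]ˣ) : ℚ_[p]) := by rw [← h1]
        _ = c i * ((W⁻¹ : ℚ_[p]ˣ) : ℚ_[p])^N := by push_cast [hc]; rfl
  have hex : ∃ zu : ℚ_[p]ˣ, zu^n = yu^n ∧
      ∃ i : Fin r, (QuotientGroup.mk zu : ℚ_[p]ˣ ⧸ S) = QuotientGroup.mk (rep (enum i)) := by
    set q : (ℚ_[p]ˣ ⧸ S) ⧸ μb := ((QuotientGroup.mk yu : ℚ_[p]ˣ ⧸ S) : (ℚ_[p]ˣ ⧸ S) ⧸ μb)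
      with hq
    have h1 : ((QuotientGroup.mk (rep q) : ℚ_[p]ˣ ⧸ S) : (ℚ_[p]ˣ ⧸ S) ⧸ μb)
        = ((QuotientGroup.mk yu : ℚ_[p]ˣ ⧸ S) : (ℚ_[p]ˣ ⧸ S) ⧸ μb) := hrepmk q
    rw [QuotientGroup.eq] at h1
    have h1' : (QuotientGroup.mk ((rep q)⁻¹ * yu) : ℚ_[p]ˣ ⧸ S) ∈ μb := by
      rw [QuotientGroup.mk_mul, QuotientGroup.mk_inv]
      exact h1
    obtain ⟨ζ, hζμ, hζeq⟩ := Subgroup.mem_map.mp h1'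
    have h2 : (QuotientGroup.mk ζ : ℚ_[p]ˣ ⧸ S) = QuotientGroup.mk ((rep q)⁻¹ * yu) := hζeq
    rw [QuotientGroup.eq] at h2
    obtain ⟨W, hW⟩ := h2
    rw [powMonoidHom_apply] at hW
    have huniteq : yu * ζ⁻¹ = rep q * W^N := by
      rw [hW, mul_comm (ζ⁻¹) (((rep q))⁻¹ * yu), ← mul_assoc, mul_inv_cancel_left]
    refine ⟨yu * ζ⁻¹, ?_, enum.symm q, ?_⟩
    · have hζn : ζ^n = 1 := hζμ
      rw [mul_pow, inv_pow, hζn, inv_one, mul_one]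
    · rw [Equiv.apply_symm_apply]
      have h3 : (QuotientGroup.mk (W^N) : ℚ_[p]ˣ ⧸ S) = 1 :=
        (QuotientGroup.eq_one_iff _).mpr ⟨W, rfl⟩
      calc (QuotientGroup.mk (yu * ζ⁻¹) : ℚ_[p]ˣ ⧸ S)
          = QuotientGroup.mk (rep q * W^N) := by rw [huniteq]
        _ = QuotientGroup.mk (rep q) * QuotientGroup.mk (W^N) := by rw [QuotientGroup.mk_mul]
        _ = QuotientGroup.mk (rep q) := by
            rw [h3]
            first
              | exact mul_one (QuotientGroup.mk (rep q) : ℚ_[p]ˣ ⧸ S)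
              | simp only [mul_one]
              | group
  obtain ⟨zu, hzn, hzsel⟩ := hex
  have hQclass : ∀ (vu : ℚ_[p]ˣ) (i : Fin r),
      (QuotientGroup.mk vu : ℚ_[p]ˣ ⧸ S) = QuotientGroup.mk (rep (enum i)) →
      ((QuotientGroup.mk vu : ℚ_[p]ˣ ⧸ S) : (ℚ_[p]ˣ ⧸ S) ⧸ μb) = enum i := by
    intro vu i h
    rw [h]
    exact hrepmk (enum i)
  refine ⟨(zu : ℚ_[p]), ⟨?_, (bridge zu).mpr hzsel⟩, ?_⟩
  · calc ((zu : ℚ_[p]))^n = ((zu^n : ℚ_[p]ˣ) : ℚ_[p]) := by rw [Units.val_pow_eq_pow_val]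
      _ = ((yu^n : ℚ_[p]ˣ) : ℚ_[p]) := by rw [hzn]
      _ = y^n := by rw [Units.val_pow_eq_pow_val, hyu, Units.val_mk0]
  · rintro z' ⟨hz'n, hz'sel⟩
    have hz'0 : z' ≠ 0 := by
      obtain ⟨i, w, hw0, hwz⟩ := hz'sel
      rw [hwz]
      exact mul_ne_zero (Units.ne_zero _) (pow_ne_zero _ hw0)
    set z'u : ℚ_[p]ˣ := Units.mk0 z' hz'0 with hz'u
    obtain ⟨i1, hi1⟩ := (bridge z'u).mp (by rw [hz'u, Units.val_mk0]; exact hz'sel)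
    obtain ⟨i2, hi2⟩ := hzsel
    -- the ratio is in μ
    have hzval : ((zu : ℚ_[p]))^n = y^n := by
      calc ((zu : ℚ_[p]))^n = ((zu^n : ℚ_[p]ˣ) : ℚ_[p]) := by rw [Units.val_pow_eq_pow_val]
        _ = ((yu^n : ℚ_[p]ˣ) : ℚ_[p]) := by rw [hzn]
        _ = y^n := by rw [Units.val_pow_eq_pow_val, hyu, Units.val_mk0]
    have hratioμ : zu⁻¹ * z'u ∈ μ := by
      show (zu⁻¹ * z'u)^n = 1
      apply Units.ext
      rw [Units.val_pow_eq_pow_val, Units.val_one, Units.val_mul, mul_pow]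
      have hval1 : ((zu⁻¹ : ℚ_[p]ˣ) : ℚ_[p]) = ((zu : ℚ_[p]))⁻¹ := by
        rw [Units.val_inv_eq_inv_val]
      rw [hval1, hz'u, Units.val_mk0, inv_pow, hz'n, hzval]
      field_simp
    -- classes in Q agree
    have hQeq : ((QuotientGroup.mk zu : ℚ_[p]ˣ ⧸ S) : (ℚ_[p]ˣ ⧸ S) ⧸ μb)
        = ((QuotientGroup.mk z'u : ℚ_[p]ˣ ⧸ S) : (ℚ_[p]ˣ ⧸ S) ⧸ μb) := by
      rw [QuotientGroup.eq]
      refine Subgroup.mem_map.mpr ⟨zu⁻¹ * z'u, hratioμ, ?_⟩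
      show (QuotientGroup.mk (zu⁻¹ * z'u) : ℚ_[p]ˣ ⧸ S) = _
      rw [QuotientGroup.mk_mul, QuotientGroup.mk_inv]
    have henum12 : enum i2 = enum i1 := by
      rw [← hQclass zu i2 hi2, ← hQclass z'u i1 hi1]
      exact hQeq
    have hmkeq : (QuotientGroup.mk z'u : ℚ_[p]ˣ ⧸ S) = QuotientGroup.mk zu := by
      rw [hi1, hi2, ← henum12]
    rw [QuotientGroup.eq] at hmkeq
    obtain ⟨V, hV⟩ := hmkeq
    rw [powMonoidHom_apply] at hV
    have hratioS : z'u⁻¹ * zu ∈ S := ⟨V, by rw [powMonoidHom_apply, hV]⟩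
    have hratioμ' : z'u⁻¹ * zu ∈ μ := by
      show (z'u⁻¹ * zu)^n = 1
      have h1 : (zu⁻¹ * z'u)^n = 1 := hratioμ
      have h2 : (z'u⁻¹ * zu) = (zu⁻¹ * z'u)⁻¹ := by group
      rw [h2, inv_pow, h1, inv_one]
    have := μinj _ hratioμ' hratioS
    have hz'zu : z'u = zu := by
      have h3 : z'u * (z'u⁻¹ * zu) = z'u * 1 := by rw [this]
      rw [mul_inv_cancel_left, mul_one] at h3
      exact h3.symm
    rw [← hz'zu, hz'u, Units.val_mk0]

end PadicNthRootAux

open PadicSub in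
/-- For every `n > 0` there is a semialgebraic function `h : P_n → ℚ_p` with
`|h(t)| = |t|^{1/n}` for every `t ∈ P_n` (used in the proof of Theorem 3.1 of the paper). -/
theorem exists_semialgebraic_nth_root_of_norm
    (p : ℕ) [Fact p.Prime] (n : ℕ) (hn : 0 < n) :
    ∃ h : ℚ_[p] → ℚ_[p], IsSemialgebraicFnOn1 p (Pset p n) h ∧
      ∀ t ∈ Pset p n, ‖h t‖ = ‖t‖ ^ ((n : ℝ)⁻¹) := by
  classical
  obtain ⟨N, r, c, hN, hc0, hsel⟩ := PadicNthRootAux.exists_selector (p := p) n hn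
  set Csel : ℚ_[p] → Prop := fun z => ∃ i : Fin r, ∃ w : ℚ_[p], w ≠ 0 ∧ z = c i * w^N
    with hCsel
  set h : ℚ_[p] → ℚ_[p] := fun t =>
    if ht : ∃ z : ℚ_[p], z^n = t ∧ Csel z then ht.choose else 0 with hh
  -- basic facts
  have hcN : ∀ i, (c i)^N = (c i)^(N-1) * c i := by
    intro i
    rw [← pow_succ]
    congr 1
    omega
  have hex : ∀ t ∈ Pset p n, ∃ z : ℚ_[p], z^n = t ∧ Csel z := by
    rintro t ⟨y, hy0, rfl⟩
    obtain ⟨z, hz, -⟩ := hsel y hy0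
    exact ⟨z, hz⟩
  have hspec : ∀ t ∈ Pset p n, (h t)^n = t ∧ Csel (h t) := by
    intro t ht
    rw [hh]
    simp only [dif_pos (hex t ht)]
    exact (hex t ht).choose_spec
  have huniq : ∀ t ∈ Pset p n, ∀ z : ℚ_[p], z^n = t ∧ Csel z → z = h t := by
    rintro t ht z hz
    obtain ⟨y, hy0, hyt⟩ := ht
    obtain ⟨z₀, hz₀, hz₀u⟩ := hsel y hy0
    have h1 : z = z₀ := hz₀u z (by rw [hyt]; exact hz)
    have h2 : h t = z₀ := hz₀u (h t) (by rw [hyt]; exact hspec t ⟨y, hy0, hyt⟩)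
    rw [h1, h2]
  -- coset description
  have hcoset : ∀ (i : Fin r) (z1 : ℚ_[p]),
      ((∃ w : ℚ_[p], w ≠ 0 ∧ z1 = c i * w^N) ↔ (c i)^(N-1) * z1 ∈ Pset p N) := by
    intro i z1
    constructor
    · rintro ⟨w, hw0, rfl⟩
      refine ⟨c i * w, mul_ne_zero (hc0 i) hw0, ?_⟩
      rw [mul_pow, hcN i]
      ring
    · rintro ⟨w, hw0, hw⟩
      refine ⟨w / c i, div_ne_zero hw0 (hc0 i), ?_⟩
      apply mul_left_cancel₀ (pow_ne_zero (N-1) (hc0 i))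
      rw [← hw, div_pow, ← mul_assoc, ← hcN i, mul_comm ((c i)^N),
        div_mul_cancel₀ _ (pow_ne_zero N (hc0 i))]
  refine ⟨h, ?_, ?_⟩
  · -- semialgebraic graph
    set q1 : MvPolynomial (Fin 2) ℚ_[p] :=
      (MvPolynomial.X 1)^n - MvPolynomial.X 0 with hq1
    set q2 : Fin r → MvPolynomial (Fin 2) ℚ_[p] :=
      fun i => MvPolynomial.C ((c i)^(N-1)) * MvPolynomial.X 1 with hq2
    set F : Fin r → Fin 2 → Set (Fin 2 → ℚ_[p]) := fun i =>
      ![{z | MvPolynomial.eval z q1 = 0}, {z | MvPolynomial.eval z (q2 i) ∈ Pset p N}] with hF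
    refine ⟨r, 2, F, ?_, ?_⟩
    · intro i j
      fin_cases j
      · exact Or.inl ⟨q1, by simp [hF]⟩
      · exact Or.inr ⟨q2 i, N, hN, by simp [hF]⟩
    · ext z
      have heval1 : MvPolynomial.eval z q1 = (z 1)^n - z 0 := by simp [hq1]
      have heval2 : ∀ i, MvPolynomial.eval z (q2 i) = (c i)^(N-1) * z 1 := by
        intro i; simp [hq2]
      constructor
      · rintro ⟨hz0, hz1⟩
        obtain ⟨hpow, i, w, hw0, hw⟩ := hspec (z 0) hz0
        refine Set.mem_iUnion.mpr ⟨i, Set.mem_iInter.mpr ?_⟩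
        intro j
        fin_cases j
        · show z ∈ F i 0
          have hgoal : MvPolynomial.eval z q1 = 0 := by
            rw [heval1, ← hz1, hpow]
            ring
          simp only [hF, Matrix.cons_val_zero]
          exact hgoal
        · show z ∈ F i 1
          have hgoal : MvPolynomial.eval z (q2 i) ∈ Pset p N := by
            rw [heval2 i]
            exact (hcoset i (z 1)).mp ⟨w, hw0, by rw [← hz1]; exact hw⟩
          simp only [hF, Matrix.cons_val_one, Matrix.head_cons]
          exact hgoal
      · intro hz
        obtain ⟨i, hi⟩ := Set.mem_iUnion.mp hz
        have h0 : (z 1)^n - z 0 = 0 := by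
          have h := Set.mem_iInter.mp hi 0
          simp only [hF, Matrix.cons_val_zero, Set.mem_setOf_eq] at h
          rw [← heval1]
          exact h
        have h1 : (c i)^(N-1) * z 1 ∈ Pset p N := by
          have h := Set.mem_iInter.mp hi 1
          simp only [hF, Matrix.cons_val_one, Matrix.head_cons, Set.mem_setOf_eq] at h
          rw [← heval2 i]
          exact h
        have hz1sel : ∃ w : ℚ_[p], w ≠ 0 ∧ z 1 = c i * w^N := (hcoset i (z 1)).mpr h1
        obtain ⟨w, hw0, hw⟩ := hz1sel
        have hz10 : z 1 ≠ 0 := by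
          rw [hw]; exact mul_ne_zero (hc0 i) (pow_ne_zero _ hw0)
        have hpow : (z 1)^n = z 0 := by linear_combination h0
        have hz0P : z 0 ∈ Pset p n := ⟨z 1, hz10, hpow⟩
        refine ⟨hz0P, ?_⟩
        exact (huniq (z 0) hz0P (z 1) ⟨hpow, i, w, hw0, hw⟩).symm
  · -- norm computation
    intro t ht
    obtain ⟨hpow, -⟩ := hspec t ht
    have hnorm : ‖h t‖^n = ‖t‖ := by rw [← norm_pow, hpow]
    rw [← hnorm, ← Real.rpow_natCast ‖h t‖ n, ← Real.rpow_mul (norm_nonneg _)]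
    rw [mul_inv_cancel₀ (by exact_mod_cast hn.ne' : (n:ℝ) ≠ 0), Real.rpow_one]
end

section
/- Let μ ∈ ℚ_p^×, let n > 0 be an integer, and for k ∈ ℤ let S_k = {u ∈ μP_n : v(u) = k}. Then S_k is nonempty if and only if k ≡ v(μ) (mod n), and for any integers k, s both congruent to v(μ) modulo n, the Haar measure of S_k equals p^{s−k} times the Haar measure of S_s. -/
open Filter MeasureTheory
open scoped ENNReal

section CosetFiberHelpers

open MeasureTheory PadicSub
open scoped ENNReal NNReal

variable {p : ℕ} [Fact p.Prime]

private lemma pQp_ne_zero : (p : ℚ_[p]) ≠ 0 :=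
  Nat.cast_ne_zero.2 (Fact.out : p.Prime).ne_zero

private lemma val_p_zpow (j : ℤ) : ((p : ℚ_[p]) ^ j).valuation = j := by
  have hp1 : (1 : ℝ) < p := by exact_mod_cast (Fact.out : p.Prime).one_lt
  have h0 : ((p : ℚ_[p]) ^ j) ≠ 0 := zpow_ne_zero _ pQp_ne_zero
  have h1 := Padic.norm_p_zpow (p := p) j
  rw [Padic.norm_eq_zpow_neg_valuation h0] at h1
  have h2 := zpow_right_injective₀ (a := (p : ℝ)) (by linarith) (by linarith) h1
  omega

private lemma val_pow {x : ℚ_[p]} (hx : x ≠ 0) (n : ℕ) :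
    (x ^ n).valuation = n * x.valuation := by
  induction n with
  | zero => simp
  | succ m ih =>
    rw [pow_succ, Padic.valuation_mul (pow_ne_zero m hx) hx, ih]
    push_cast; ring

private lemma pset_mul {n : ℕ} {a b : ℚ_[p]} (ha : a ∈ Pset p n)
    (hb : b ∈ Pset p n) : a * b ∈ Pset p n := by
  obtain ⟨y, hy, rfl⟩ := ha; obtain ⟨z, hz, rfl⟩ := hb
  exact ⟨y * z, mul_ne_zero hy hz, mul_pow y z n⟩

private lemma pset_p_zpow {n : ℕ} {j : ℤ} (h : (n : ℤ) ∣ j) :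
    (p : ℚ_[p]) ^ j ∈ Pset p n := by
  obtain ⟨e, rfl⟩ := h
  refine ⟨(p : ℚ_[p]) ^ e, zpow_ne_zero _ pQp_ne_zero, ?_⟩
  rw [← zpow_natCast ((p : ℚ_[p]) ^ e) n, ← zpow_mul, mul_comm]

private lemma cosetP_zpow_mul_iff {μ : ℚ_[p]} {n : ℕ} {j : ℤ} (h : (n : ℤ) ∣ j) (x : ℚ_[p]) :
    (p : ℚ_[p]) ^ j * x ∈ cosetP p μ n ↔ x ∈ cosetP p μ n := by
  constructor
  · rintro ⟨y, hy, hxy⟩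
    refine ⟨(p : ℚ_[p]) ^ (-j) * y, pset_mul (pset_p_zpow (dvd_neg.2 h)) hy, ?_⟩
    have hx : x = (p : ℚ_[p]) ^ (-j) * ((p : ℚ_[p]) ^ j * x) := by
      rw [← mul_assoc, ← zpow_add₀ pQp_ne_zero]; simp
    rw [hx, hxy]; ring
  · rintro ⟨y, hy, rfl⟩
    exact ⟨(p : ℚ_[p]) ^ j * y, pset_mul (pset_p_zpow h) hy, by ring⟩

private lemma cosetP_ne_zero {μ : ℚ_[p]} (hμ : μ ≠ 0) {n : ℕ} {x : ℚ_[p]}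
    (hx : x ∈ cosetP p μ n) : x ≠ 0 := by
  obtain ⟨y, ⟨w, hw, rfl⟩, rfl⟩ := hx
  exact mul_ne_zero hμ (pow_ne_zero _ hw)

/-- The closed ball of radius `p^(-m)` in `ℚ_p`. -/
private def pBall (p : ℕ) [Fact p.Prime] (m : ℤ) : Set ℚ_[p] :=
  {x | ‖x‖ ≤ (p : ℝ) ^ (-m)}

private lemma pBall_measurableSet (m : ℤ) : MeasurableSet (pBall p m) :=
  (isClosed_le continuous_norm continuous_const).measurableSet

private lemma pBall_eq_closedBall (m : ℤ) :
    pBall p m = Metric.closedBall (0 : ℚ_[p]) ((p : ℝ) ^ (-m)) := by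
  ext x; simp [pBall, Metric.mem_closedBall, dist_zero_right]

private lemma pBall_measure_step (ν : Measure ℚ_[p]) [ν.IsAddHaarMeasure] (m : ℤ) :
    ν (pBall p m) = p * ν (pBall p (m + 1)) := by
  have hp1 : (1 : ℝ) < p := by exact_mod_cast (Fact.out : p.Prime).one_lt
  have hpR : (p : ℝ) ≠ 0 := by positivity
  set T : Fin p → Set ℚ_[p] :=
    fun a => (fun x => -((a : ℚ_[p]) * (p : ℚ_[p]) ^ m) + x) ⁻¹' pBall p (m + 1) with hT
  have hTmem : ∀ (a : Fin p) (x : ℚ_[p]),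
      x ∈ T a ↔ ‖x - (a : ℚ_[p]) * (p : ℚ_[p]) ^ m‖ ≤ (p : ℝ) ^ (-(m + 1)) := by
    intro a x
    simp only [hT, Set.mem_preimage, pBall, Set.mem_setOf_eq, neg_add_eq_sub]
  have hcover : pBall p m = ⋃ a : Fin p, T a := by
    ext x
    simp only [Set.mem_iUnion]
    constructor
    · intro hx
      have hx' : ‖x‖ ≤ (p : ℝ) ^ (-m) := hx
      set z : ℚ_[p] := x * (p : ℚ_[p]) ^ (-m) with hz
      have hznorm : ‖z‖ ≤ 1 := by
        rw [hz, Padic.padicNormE.mul, Padic.norm_p_zpow, neg_neg]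
        calc ‖x‖ * (p : ℝ) ^ m ≤ (p : ℝ) ^ (-m) * (p : ℝ) ^ m := by
              apply mul_le_mul_of_nonneg_right hx' (by positivity)
          _ = 1 := by rw [← zpow_add₀ hpR]; simp
      set z' : ℤ_[p] := ⟨z, hznorm⟩ with hz'
      have ha : z'.appr 1 < p := by simpa using z'.appr_lt 1
      refine ⟨⟨z'.appr 1, ha⟩, ?_⟩
      rw [hTmem]
      have hspec : z' - (z'.appr 1 : ℤ_[p]) ∈ Ideal.span {(p : ℤ_[p]) ^ 1} :=
        z'.appr_spec 1
      have hnorm1 : ‖z' - (z'.appr 1 : ℤ_[p])‖ ≤ (p : ℝ) ^ (-(1 : ℤ)) := by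
        rw [show ((-1 : ℤ)) = -(1 : ℕ) by norm_num]
        exact (PadicInt.norm_le_pow_iff_mem_span_pow _ 1).2 hspec
      have hcoe : ((z' - (z'.appr 1 : ℤ_[p]) : ℤ_[p]) : ℚ_[p]) = z - (z'.appr 1 : ℚ_[p]) := by
        push_cast [hz']
        rfl
    -- ‖z - a‖ ≤ p⁻¹ in ℚ_p
      have hq : ‖z - ((z'.appr 1 : ℕ) : ℚ_[p])‖ ≤ (p : ℝ) ^ (-(1 : ℤ)) := by
        rw [← hcoe]
        exact hnorm1
      have hxz : x - ((z'.appr 1 : ℕ) : ℚ_[p]) * (p : ℚ_[p]) ^ m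
          = (z - ((z'.appr 1 : ℕ) : ℚ_[p])) * (p : ℚ_[p]) ^ m := by
        rw [hz, sub_mul, mul_assoc, ← zpow_add₀ pQp_ne_zero]
        simp
      have : ‖x - ((z'.appr 1 : ℕ) : ℚ_[p]) * (p : ℚ_[p]) ^ m‖ ≤ (p : ℝ) ^ (-(m + 1)) := by
        rw [hxz, Padic.padicNormE.mul, Padic.norm_p_zpow]
        calc ‖z - ((z'.appr 1 : ℕ) : ℚ_[p])‖ * (p : ℝ) ^ (-m)
            ≤ (p : ℝ) ^ (-(1 : ℤ)) * (p : ℝ) ^ (-m) :=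
              mul_le_mul_of_nonneg_right hq (by positivity)
          _ = (p : ℝ) ^ (-(m + 1)) := by rw [← zpow_add₀ hpR]; ring_nf
      simpa using this
    · rintro ⟨a, hax⟩
      rw [hTmem] at hax
      have h1 : (p : ℝ) ^ (-(m + 1)) ≤ (p : ℝ) ^ (-m) :=
        zpow_le_zpow_right₀ (le_of_lt hp1) (by omega)
      have h2 : ‖(a : ℚ_[p]) * (p : ℚ_[p]) ^ m‖ ≤ (p : ℝ) ^ (-m) := by
        rw [Padic.padicNormE.mul, Padic.norm_p_zpow]
        have : ‖((a : ℕ) : ℚ_[p])‖ ≤ 1 := by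
          rw [show (((a : ℕ) : ℚ_[p])) = (((a : ℕ) : ℤ) : ℚ_[p]) by push_cast; ring]
          exact Padic.norm_int_le_one _
        calc ‖((a : ℕ) : ℚ_[p])‖ * (p : ℝ) ^ (-m) ≤ 1 * (p : ℝ) ^ (-m) :=
              mul_le_mul_of_nonneg_right this (by positivity)
          _ = (p : ℝ) ^ (-m) := one_mul _
      have : ‖x‖ ≤ (p : ℝ) ^ (-m) := by
        have hxw : x = (x - (a : ℚ_[p]) * (p : ℚ_[p]) ^ m) + (a : ℚ_[p]) * (p : ℚ_[p]) ^ m := by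
          ring
        rw [hxw]
        refine le_trans (Padic.nonarchimedean _ _) (max_le (le_trans hax h1) h2)
      exact this
  have hdisj : Pairwise (Function.onFun Disjoint T) := by
    intro a b hab
    rw [Function.onFun, Set.disjoint_left]
    intro x hxa hxb
    rw [hTmem] at hxa hxb
    have hdiff : ‖((a : ℚ_[p]) - (b : ℚ_[p])) * (p : ℚ_[p]) ^ m‖ ≤ (p : ℝ) ^ (-(m + 1)) := by
      have heq : ((a : ℚ_[p]) - (b : ℚ_[p])) * (p : ℚ_[p]) ^ m
          = (x - (b : ℚ_[p]) * (p : ℚ_[p]) ^ m) - (x - (a : ℚ_[p]) * (p : ℚ_[p]) ^ m) := by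
        ring
      rw [heq, sub_eq_add_neg]
      refine le_trans (Padic.nonarchimedean _ _) (max_le hxb ?_)
      rw [norm_neg]; exact hxa
    rw [Padic.padicNormE.mul, Padic.norm_p_zpow] at hdiff
    have hm0 : (0 : ℝ) < (p : ℝ) ^ (-m) := by positivity
    have hlt : ‖(a : ℚ_[p]) - (b : ℚ_[p])‖ < 1 := by
      by_contra hge
      push_neg at hge
      have : (p : ℝ) ^ (-m) ≤ ‖(a : ℚ_[p]) - (b : ℚ_[p])‖ * (p : ℝ) ^ (-m) := by
        nlinarith
      have hstrict : (p : ℝ) ^ (-(m + 1)) < (p : ℝ) ^ (-m) :=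
        zpow_lt_zpow_right₀ hp1 (by omega)
      linarith
    have hcast : ((a : ℚ_[p]) - (b : ℚ_[p])) = (((a : ℕ) - (b : ℕ) : ℤ) : ℚ_[p]) := by
      push_cast; ring
    rw [hcast] at hlt
    have hdvd : (p : ℤ) ∣ ((a : ℕ) : ℤ) - ((b : ℕ) : ℤ) :=
      Padic.norm_intCast_lt_one_iff.1 hlt
    have : ((a : ℕ) : ℤ) - ((b : ℕ) : ℤ) = 0 := by
      refine Int.eq_zero_of_abs_lt_dvd hdvd ?_
      have h1 := a.2
      have h2 := b.2
      rw [abs_sub_lt_iff]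
      omega
    exact hab (by
      apply Fin.ext
      omega)
  have hmeas : ∀ a : Fin p, MeasurableSet (T a) := by
    intro a
    exact (measurable_const_add _) (pBall_measurableSet (m + 1))
  have htrans : ∀ a : Fin p, ν (T a) = ν (pBall p (m + 1)) := by
    intro a
    exact measure_preimage_add ν _ _
  rw [hcover, measure_iUnion hdisj hmeas, tsum_fintype]
  simp only [htrans]
  rw [Finset.sum_const, Finset.card_univ, Fintype.card_fin, nsmul_eq_mul]

private lemma pBall_measure (ν : Measure ℚ_[p]) [ν.IsAddHaarMeasure]
    (hν1 : ν (pBall p 0) = 1) (m : ℤ) : ν (pBall p m) = (p : ℝ≥0∞) ^ (-m) := by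
  have hp0 : (p : ℝ≥0∞) ≠ 0 := by
    simp [(Fact.out : p.Prime).ne_zero]
  have hpt : (p : ℝ≥0∞) ≠ ⊤ := ENNReal.natCast_ne_top p
  have key : ∀ m : ℤ, (p : ℝ≥0∞) ^ m * ν (pBall p m) = 1 := by
    intro m
    induction m using Int.induction_on with
    | zero => simpa using hν1
    | succ i ih =>
      have hstep := pBall_measure_step ν (i : ℤ)
      calc (p : ℝ≥0∞) ^ ((i : ℤ) + 1) * ν (pBall p ((i : ℤ) + 1))
          = (p : ℝ≥0∞) ^ (i : ℤ) * ((p : ℝ≥0∞) ^ (1 : ℤ) * ν (pBall p ((i : ℤ) + 1))) := by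
            rw [ENNReal.zpow_add hp0 hpt, mul_assoc]
        _ = (p : ℝ≥0∞) ^ (i : ℤ) * ν (pBall p (i : ℤ)) := by
            rw [hstep]; norm_num
        _ = 1 := ih
    | pred i ih =>
      have hstep := pBall_measure_step ν (-(i : ℤ) - 1)
      have heq : (-(i : ℤ) - 1) + 1 = -(i : ℤ) := by ring
      rw [heq] at hstep
      calc (p : ℝ≥0∞) ^ (-(i : ℤ) - 1) * ν (pBall p (-(i : ℤ) - 1))
          = (p : ℝ≥0∞) ^ (-(i : ℤ) - 1) * ((p : ℝ≥0∞) * ν (pBall p (-(i : ℤ)))) := by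
            rw [hstep]
        _ = (p : ℝ≥0∞) ^ (-(i : ℤ)) * ν (pBall p (-(i : ℤ))) := by
            rw [show (-(i : ℤ)) = (-(i : ℤ) - 1) + 1 by ring, ENNReal.zpow_add hp0 hpt]
            ring_nf
            norm_num [mul_comm, mul_assoc, mul_left_comm]
        _ = 1 := ih
  have hkey := key m
  have hzne : (p : ℝ≥0∞) ^ m ≠ 0 := ENNReal.zpow_pos hp0 hpt m |>.ne'
  have hznt : (p : ℝ≥0∞) ^ m ≠ ⊤ := (ENNReal.zpow_lt_top hp0 hpt m).ne
  have := congrArg (fun x => ((p : ℝ≥0∞) ^ m)⁻¹ * x) hkey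
  simp only [← mul_assoc, ENNReal.inv_mul_cancel hzne hznt, one_mul, mul_one] at this
  rw [this, ← ENNReal.zpow_neg]

private lemma measure_preimage_p_zpow_mul (ν : Measure ℚ_[p]) [ν.IsAddHaarMeasure]
    (hν1 : ν (pBall p 0) = 1) (j : ℤ) (S : Set ℚ_[p]) :
    ν ((fun x => (p : ℚ_[p]) ^ j * x) ⁻¹' S) = (p : ℝ≥0∞) ^ j * ν S := by
  have hp0 : (p : ℝ≥0∞) ≠ 0 := by simp [(Fact.out : p.Prime).ne_zero]
  have hpt : (p : ℝ≥0∞) ≠ ⊤ := ENNReal.natCast_ne_top p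
  set c : ℚ_[p] := (p : ℚ_[p]) ^ j with hc_def
  have hc : c ≠ 0 := zpow_ne_zero _ pQp_ne_zero
  set f : ℚ_[p] → ℚ_[p] := fun x => c * x with hf_def
  let e : ℚ_[p] ≃+ ℚ_[p] :=
    { toFun := f
      invFun := fun x => c⁻¹ * x
      left_inv := fun x => by
        simp only [hf_def, ← mul_assoc, inv_mul_cancel₀ hc, one_mul]
      right_inv := fun x => by
        simp only [hf_def, ← mul_assoc, mul_inv_cancel₀ hc, one_mul]
      map_add' := fun x y => mul_add c x y }
  haveI hmapHaar : (ν.map f).IsAddHaarMeasure :=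
    AddEquiv.isAddHaarMeasure_map ν e (continuous_const.mul continuous_id)
      (continuous_const.mul continuous_id)
  have hmap : ∀ A : Set ℚ_[p], ν.map f A = ν (f ⁻¹' A) := by
    intro A
    have hEf : (⇑(Homeomorph.smulOfNeZero c hc).toMeasurableEquiv : ℚ_[p] → ℚ_[p]) = f := by
      rfl
    rw [← hEf]
    exact (Homeomorph.smulOfNeZero c hc).toMeasurableEquiv.map_apply A
  have huniq : ν.map f
      = Measure.addHaarScalarFactor (ν.map f) ν • ν :=
    Measure.isAddLeftInvariant_eq_smul (ν.map f) ν
  set κ : ℝ≥0 := Measure.addHaarScalarFactor (ν.map f) ν with hκ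
  have hκval : (κ : ℝ≥0∞) = (p : ℝ≥0∞) ^ j := by
    have h1 : ν.map f (pBall p 0) = ν (f ⁻¹' pBall p 0) := hmap _
    have h2 : f ⁻¹' pBall p 0 = pBall p (-j) := by
      ext x
      simp only [Set.mem_preimage, pBall, Set.mem_setOf_eq, hf_def, hc_def,
        Padic.padicNormE.mul, Padic.norm_p_zpow]
      have hp1 : (1 : ℝ) < p := by exact_mod_cast (Fact.out : p.Prime).one_lt
      have hpR : (p : ℝ) ≠ 0 := by positivity
      have hpj : (0 : ℝ) < (p : ℝ) ^ (-j) := by positivity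
      have hprod : (p : ℝ) ^ (-j) * (p : ℝ) ^ j = 1 := by
        rw [← zpow_add₀ hpR]; simp
      constructor
      · intro h
        rw [neg_neg]
        have h' : (p : ℝ) ^ j * ((p : ℝ) ^ (-j) * ‖x‖) ≤ (p : ℝ) ^ j * 1 :=
          mul_le_mul_of_nonneg_left (by simpa using h) (by positivity)
        calc ‖x‖ = (p : ℝ) ^ j * ((p : ℝ) ^ (-j) * ‖x‖) := by
              rw [← mul_assoc, ← zpow_add₀ hpR]; simp
          _ ≤ (p : ℝ) ^ j * 1 := h'
          _ = (p : ℝ) ^ j := mul_one _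
      · intro h
        rw [neg_neg] at h
        have : (p : ℝ) ^ (-j) * ‖x‖ ≤ (p : ℝ) ^ (-j) * (p : ℝ) ^ j :=
          mul_le_mul_of_nonneg_left h (le_of_lt hpj)
        rw [hprod] at this; exact this
    have h3 : ν (pBall p (-j)) = (p : ℝ≥0∞) ^ j := by
      rw [pBall_measure ν hν1, neg_neg]
    have h4 : ν.map f (pBall p 0) = (κ : ℝ≥0∞) * ν (pBall p 0) := by
      rw [huniq]
      simp [Measure.smul_apply, smul_eq_mul]
    rw [h1, h2, h3, hν1, mul_one] at h4
    exact h4.symm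
  calc ν ((fun x => (p : ℚ_[p]) ^ j * x) ⁻¹' S) = (Measure.map f ν) S := (hmap S).symm
    _ = (κ • ν) S := by rw [← huniq]
    _ = (κ : ℝ≥0∞) * ν S := by simp [Measure.smul_apply, smul_eq_mul]
    _ = (p : ℝ≥0∞) ^ j * ν S := by rw [hκval]

end CosetFiberHelpers

open PadicSub MeasureTheory in
open scoped ENNReal in
/-- The fibers `S_k = {u ∈ μP_n : v(u) = k}` of the valuation on a coset `μP_n`
(used in the proof of Theorem 4.3 of the paper): `S_k` is nonempty iff
`k ≡ v(μ) (mod n)`, and for `k, s ≡ v(μ) (mod n)` the Haar measures satisfy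
`measure S_k = p^{s-k} · measure S_s`. -/
theorem coset_valuation_fiber_measure
    (p : ℕ) [Fact p.Prime] (μ : ℚ_[p]) (hμ : μ ≠ 0) (n : ℕ) (hn : 0 < n)
    (ν : Measure ℚ_[p]) (hν : ν.IsAddHaarMeasure) (hν1 : ν {x : ℚ_[p] | ‖x‖ ≤ 1} = 1) :
    (∀ k : ℤ, {u ∈ cosetP p μ n | u.valuation = k}.Nonempty ↔
      k ≡ μ.valuation [ZMOD (n : ℤ)]) ∧
    ∀ k s : ℤ, k ≡ μ.valuation [ZMOD (n : ℤ)] → s ≡ μ.valuation [ZMOD (n : ℤ)] →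
      ν {u ∈ cosetP p μ n | u.valuation = k} =
        (p : ℝ≥0∞) ^ (s - k) * ν {u ∈ cosetP p μ n | u.valuation = s} := by
  haveI := hν
  have hν0 : ν (pBall p 0) = 1 := by
    have : pBall p 0 = {x : ℚ_[p] | ‖x‖ ≤ 1} := by
      ext x; simp [pBall]
    rw [this]; exact hν1
  constructor
  · intro k
    constructor
    · rintro ⟨u, hu, hval⟩
      obtain ⟨y, ⟨w, hw, rfl⟩, rfl⟩ := hu
      rw [Padic.valuation_mul hμ (pow_ne_zero _ hw), val_pow hw] at hval
      have : μ.valuation - k = (n : ℤ) * (-w.valuation) := by rw [← hval]; ring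
      exact Int.modEq_iff_dvd.2 ⟨-w.valuation, this⟩
    · intro hk
      have hd : (n : ℤ) ∣ μ.valuation - k := Int.ModEq.dvd hk
      obtain ⟨e, he⟩ := hd
      refine ⟨μ * ((p : ℚ_[p]) ^ (-e)) ^ n,
        ⟨((p : ℚ_[p]) ^ (-e)) ^ n, ⟨(p : ℚ_[p]) ^ (-e), zpow_ne_zero _ pQp_ne_zero, rfl⟩, rfl⟩, ?_⟩
      rw [Padic.valuation_mul hμ (pow_ne_zero _ (zpow_ne_zero _ pQp_ne_zero)),
        val_pow (zpow_ne_zero _ pQp_ne_zero), val_p_zpow]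
      have : μ.valuation - k = (n : ℤ) * e := he
      linarith
  · intro k s hk hs
    set j : ℤ := s - k with hj_def
    have hj : (n : ℤ) ∣ j := by
      have h1 : s ≡ k [ZMOD (n : ℤ)] := hs.trans hk.symm
      have := Int.ModEq.dvd h1
      exact (dvd_sub_comm).1 this
    have hset : (fun x => (p : ℚ_[p]) ^ j * x) ⁻¹' {u ∈ cosetP p μ n | u.valuation = s}
        = {u ∈ cosetP p μ n | u.valuation = k} := by
      ext x
      simp only [Set.mem_preimage, Set.mem_setOf_eq, Set.sep_setOf, Set.mem_setOf_eq]
      constructor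
      · rintro ⟨h1, h2⟩
        have hx0 : x ≠ 0 := by
          rintro rfl
          rw [mul_zero] at h1
          exact (cosetP_ne_zero hμ h1) rfl
        refine ⟨(cosetP_zpow_mul_iff hj x).1 h1, ?_⟩
        rw [Padic.valuation_mul (zpow_ne_zero _ pQp_ne_zero) hx0, val_p_zpow] at h2
        omega
      · rintro ⟨h1, h2⟩
        have hx0 : x ≠ 0 := cosetP_ne_zero hμ h1
        refine ⟨(cosetP_zpow_mul_iff hj x).2 h1, ?_⟩
        rw [Padic.valuation_mul (zpow_ne_zero _ pQp_ne_zero) hx0, val_p_zpow]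
        omega
    calc ν {u ∈ cosetP p μ n | u.valuation = k}
        = ν ((fun x => (p : ℚ_[p]) ^ j * x) ⁻¹' {u ∈ cosetP p μ n | u.valuation = s}) := by
          rw [hset]
      _ = (p : ℝ≥0∞) ^ j * ν {u ∈ cosetP p μ n | u.valuation = s} :=
          measure_preimage_p_zpow_mul ν hν0 j _
      _ = (p : ℝ≥0∞) ^ (s - k) * ν {u ∈ cosetP p μ n | u.valuation = s} := by rw [hj_def]
end

section
/- Let a ∈ ℤ, n ∈ ℤ with n > 0, l ∈ ℤ with l ≥ 0, and β ∈ ℚ_p^×. The function u ↦ p^{−a·v(u)/n} · v(u)^l is absolutely integrable with respect to Haar measure on the set {u ∈ ℚ_p : 0 < |u| < |β|} if and only if a + n > 0. -/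
open Filter MeasureTheory
open scoped ENNReal

open scoped NNReal

namespace IntCrit
open PadicSub
variable {p : ℕ} [hp : Fact p.Prime]

def pB (p : ℕ) [Fact p.Prime] (k : ℤ) : Set ℚ_[p] := {x | ‖x‖ ≤ (p : ℝ) ^ (-k)}

def pS (p : ℕ) [Fact p.Prime] (m : ℤ) : Set ℚ_[p] := {x | ‖x‖ = (p : ℝ) ^ (-m)}

lemma one_lt_pR : (1 : ℝ) < p := Nat.one_lt_cast.2 hp.out.one_lt

lemma pR_pos : (0 : ℝ) < p := lt_trans one_pos one_lt_pR

lemma pQ_ne_zero : (p : ℚ_[p]) ≠ 0 := Nat.cast_ne_zero.2 hp.out.ne_zero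

lemma pB_measurable (k : ℤ) : MeasurableSet (pB p k) :=
  (isClosed_le continuous_norm continuous_const).measurableSet

lemma pS_measurable (m : ℤ) : MeasurableSet (pS p m) :=
  (isClosed_eq continuous_norm continuous_const).measurableSet

lemma pB_succ_subset (k : ℤ) : pB p (k + 1) ⊆ pB p k := fun x hx =>
  le_trans hx (zpow_le_zpow_right₀ (le_of_lt one_lt_pR) (by omega))

/-- The ball of radius `p^{-k}` is covered by the `p` cosets of the ball of radius
`p^{-(k+1)}` centered at `j * p^k`, `j = 0, ..., p-1`. -/
lemma pB_cover (k : ℤ) :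
    pB p k = ⋃ j ∈ Finset.range p,
      (fun x => x - (j : ℚ_[p]) * (p : ℚ_[p]) ^ k) ⁻¹' pB p (k + 1) := by
  have hp1 : (1 : ℝ) < p := one_lt_pR
  have hpq : (p : ℚ_[p]) ≠ 0 := pQ_ne_zero
  ext x
  simp only [Set.mem_iUnion, Set.mem_preimage, Finset.mem_range, pB, Set.mem_setOf_eq,
    exists_prop]
  constructor
  · intro hx
    set y : ℚ_[p] := x * (p : ℚ_[p]) ^ (-k) with hy
    have hxy : x = y * (p : ℚ_[p]) ^ k := by
      rw [hy, mul_assoc, ← zpow_add₀ hpq, neg_add_cancel, zpow_zero, mul_one]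
    have hny : ‖y‖ ≤ 1 := by
      rw [hy, Padic.padicNormE.mul, Padic.norm_p_zpow, neg_neg]
      calc ‖x‖ * (p : ℝ) ^ k ≤ (p : ℝ) ^ (-k) * (p : ℝ) ^ k := by
            apply mul_le_mul_of_nonneg_right hx (le_of_lt (zpow_pos pR_pos k))
        _ = 1 := by rw [← zpow_add₀ (ne_of_gt pR_pos), neg_add_cancel, zpow_zero]
    set Y : ℤ_[p] := ⟨y, hny⟩ with hY
    refine ⟨Y.appr 1, by simpa using Y.appr_lt 1, ?_⟩
    have hspec : ‖Y - (Y.appr 1 : ℤ_[p])‖ ≤ (p : ℝ) ^ (-(1 : ℕ) : ℤ) :=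
      (PadicInt.norm_le_pow_iff_mem_span_pow _ 1).2 (by simpa using Y.appr_spec 1)
    have hYq : ‖y - ((Y.appr 1 : ℕ) : ℚ_[p])‖ ≤ (p : ℝ) ^ (-1 : ℤ) := by
      have : ((Y - (Y.appr 1 : ℤ_[p]) : ℤ_[p]) : ℚ_[p]) = y - ((Y.appr 1 : ℕ) : ℚ_[p]) := by
        have hYy : (Y : ℚ_[p]) = y := rfl
        rw [PadicInt.coe_sub, PadicInt.coe_natCast, hYy]
      rw [← this, PadicInt.padic_norm_e_of_padicInt]
      simpa using hspec
    have : x - ((Y.appr 1 : ℕ) : ℚ_[p]) * (p : ℚ_[p]) ^ k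
        = (y - ((Y.appr 1 : ℕ) : ℚ_[p])) * (p : ℚ_[p]) ^ k := by rw [hxy]; ring
    rw [this, Padic.padicNormE.mul, Padic.norm_p_zpow]
    calc ‖y - ((Y.appr 1 : ℕ) : ℚ_[p])‖ * (p : ℝ) ^ (-k)
        ≤ (p : ℝ) ^ (-1 : ℤ) * (p : ℝ) ^ (-k) :=
          mul_le_mul_of_nonneg_right hYq (le_of_lt (zpow_pos pR_pos _))
      _ = (p : ℝ) ^ (-(k + 1)) := by rw [← zpow_add₀ (ne_of_gt pR_pos)]; ring_nf
  · rintro ⟨j, hj, hx⟩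
    have h1 : ‖x - (j : ℚ_[p]) * (p : ℚ_[p]) ^ k‖ ≤ (p : ℝ) ^ (-k) :=
      le_trans hx (zpow_le_zpow_right₀ (le_of_lt hp1) (by omega))
    have h2 : ‖(j : ℚ_[p]) * (p : ℚ_[p]) ^ k‖ ≤ (p : ℝ) ^ (-k) := by
      rw [Padic.padicNormE.mul, Padic.norm_p_zpow]
      have : ‖((j : ℤ) : ℚ_[p])‖ ≤ 1 := Padic.norm_int_le_one _
      calc ‖(j : ℚ_[p])‖ * (p : ℝ) ^ (-k) ≤ 1 * (p : ℝ) ^ (-k) := by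
            apply mul_le_mul_of_nonneg_right _ (le_of_lt (zpow_pos pR_pos _))
            simpa using this
        _ = (p : ℝ) ^ (-k) := one_mul _
    calc ‖x‖ = ‖(x - (j : ℚ_[p]) * (p : ℚ_[p]) ^ k) + (j : ℚ_[p]) * (p : ℚ_[p]) ^ k‖ := by
          ring_nf
      _ ≤ max ‖x - (j : ℚ_[p]) * (p : ℚ_[p]) ^ k‖ ‖(j : ℚ_[p]) * (p : ℚ_[p]) ^ k‖ :=
          Padic.nonarchimedean _ _
      _ ≤ (p : ℝ) ^ (-k) := max_le h1 h2
open ENNReal in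
lemma pB_step (ν : Measure ℚ_[p]) (hν : ν.IsAddHaarMeasure) (k : ℤ) :
    ν (pB p k) = (p : ℝ≥0∞) * ν (pB p (k + 1)) := by
  have hp1 : (1 : ℝ) < p := one_lt_pR
  have hdisj : (↑(Finset.range p) : Set ℕ).PairwiseDisjoint
      (fun j : ℕ => (fun x => x - (j : ℚ_[p]) * (p : ℚ_[p]) ^ k) ⁻¹' pB p (k + 1)) := by
    intro j hj j' hj' hne
    simp only [Finset.coe_range, Set.mem_Iio] at hj hj'
    refine Set.disjoint_left.2 fun x hx hx' => ?_
    simp only [Set.mem_preimage, pB, Set.mem_setOf_eq] at hx hx'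
    have hd : ‖(j : ℚ_[p]) - (j' : ℚ_[p])‖ * (p : ℝ) ^ (-k) ≤ (p : ℝ) ^ (-(k + 1)) := by
      rw [← Padic.norm_p_zpow, ← Padic.padicNormE.mul]
      have : ((j : ℚ_[p]) - (j' : ℚ_[p])) * (p : ℚ_[p]) ^ k
          = (x - (j' : ℚ_[p]) * (p : ℚ_[p]) ^ k) - (x - (j : ℚ_[p]) * (p : ℚ_[p]) ^ k) := by
        ring
      rw [this, sub_eq_add_neg]
      refine le_trans (Padic.nonarchimedean _ _) ?_
      rw [norm_neg]
      exact max_le hx' hx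
    have hcast : ((((j : ℤ) - j') : ℤ) : ℚ_[p]) = (j : ℚ_[p]) - (j' : ℚ_[p]) := by
      push_cast; ring
    have hlt : ‖((((j : ℤ) - j') : ℤ) : ℚ_[p])‖ < 1 := by
      rw [hcast]
      have hk : (0 : ℝ) < (p : ℝ) ^ (-k) := zpow_pos pR_pos _
      have h2 : ‖(j : ℚ_[p]) - (j' : ℚ_[p])‖ ≤ (p : ℝ)⁻¹ := by
        refine le_of_mul_le_mul_right ?_ hk
        calc ‖(j : ℚ_[p]) - (j' : ℚ_[p])‖ * (p : ℝ) ^ (-k)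
            ≤ (p : ℝ) ^ (-(k + 1)) := hd
          _ = (p : ℝ)⁻¹ * (p : ℝ) ^ (-k) := by
              rw [← zpow_neg_one, ← zpow_add₀ (ne_of_gt pR_pos)]; ring_nf
      exact lt_of_le_of_lt h2 (inv_lt_one_of_one_lt₀ hp1)
    have hdvd : (p : ℤ) ∣ ((j : ℤ) - j') := Padic.norm_intCast_lt_one_iff.1 hlt
    have hz : ((j : ℤ) - j') = 0 := Int.eq_zero_of_abs_lt_dvd hdvd (by
      rw [abs_sub_lt_iff]; omega)
    exact hne (by omega)
  have hmeas : ∀ j : ℕ, j ∈ Finset.range p →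
      MeasurableSet ((fun x => x - (j : ℚ_[p]) * (p : ℚ_[p]) ^ k) ⁻¹' pB p (k + 1)) := by
    intro j _
    exact (pB_measurable (k + 1)).preimage
      ((continuous_id.sub continuous_const).measurable)
  have heach : ∀ j : ℕ,
      ν ((fun x => x - (j : ℚ_[p]) * (p : ℚ_[p]) ^ k) ⁻¹' pB p (k + 1)) = ν (pB p (k + 1)) := by
    intro j
    have : (fun x : ℚ_[p] => x - (j : ℚ_[p]) * (p : ℚ_[p]) ^ k)
        = (fun x => -((j : ℚ_[p]) * (p : ℚ_[p]) ^ k) + x) := by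
      funext x; ring
    rw [this]
    exact measure_preimage_add ν _ _
  rw [pB_cover k, measure_biUnion_finset hdisj hmeas]
  simp only [heach, Finset.sum_const, Finset.card_range, nsmul_eq_mul]

open ENNReal in
lemma pB_measure (ν : Measure ℚ_[p]) (hν : ν.IsAddHaarMeasure)
    (hν1 : ν {x : ℚ_[p] | ‖x‖ ≤ 1} = 1) (k : ℤ) :
    ν (pB p k) = ENNReal.ofReal ((p : ℝ) ^ (-k)) := by
  have hp0 : (p : ℝ≥0∞) ≠ 0 := by
    simp [hp.out.ne_zero]
  have hpt : (p : ℝ≥0∞) ≠ ∞ := natCast_ne_top p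
  have hmul : ∀ m : ℤ, (p : ℝ≥0∞) * ENNReal.ofReal ((p : ℝ) ^ (-(m + 1)))
      = ENNReal.ofReal ((p : ℝ) ^ (-m)) := by
    intro m
    rw [← ENNReal.ofReal_natCast, ← ENNReal.ofReal_mul (by positivity)]
    congr 1
    rw [show -(m : ℤ) = 1 + -(m + 1) by ring, zpow_add₀ (ne_of_gt pR_pos), zpow_one]
  have base : ν (pB p 0) = ENNReal.ofReal ((p : ℝ) ^ (-(0 : ℤ))) := by
    have : pB p (0 : ℤ) = {x : ℚ_[p] | ‖x‖ ≤ 1} := by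
      ext x; simp [pB]
    rw [this, hν1]; simp
  induction k using Int.induction_on with
  | zero => exact base
  | succ k ih =>
    have h := pB_step ν hν k
    rw [ih, ← hmul k] at h
    have := (ENNReal.mul_right_inj hp0 hpt).1 (h.symm.trans rfl)
    simpa using this
  | pred k ih =>
    have h := pB_step ν hν (-(k : ℤ) - 1)
    rw [show (-(k : ℤ) - 1 + 1) = -(k : ℤ) by ring, ih] at h
    rw [h, ← hmul (-(k : ℤ) - 1)]
    congr 2
    ring
lemma pS_eq_diff (m : ℤ) : pS p m = pB p m \ pB p (m + 1) := by
  have hp1 : (1 : ℝ) < p := one_lt_pR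
  ext x
  simp only [pS, pB, Set.mem_setOf_eq, Set.mem_diff, not_le]
  constructor
  · intro h
    refine ⟨le_of_eq h, ?_⟩
    rw [h]
    exact (zpow_lt_zpow_iff_right₀ hp1).2 (by omega)
  · rintro ⟨h1, h2⟩
    refine le_antisymm h1 ?_
    have := (Padic.norm_le_pow_iff_norm_lt_pow_add_one x (-(m + 1))).not.1 (not_le.2 h2)
    rw [not_lt, show (-(m + 1) + 1 : ℤ) = -m by ring] at this
    exact this

open ENNReal in
lemma pS_measure (ν : Measure ℚ_[p]) (hν : ν.IsAddHaarMeasure)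
    (hν1 : ν {x : ℚ_[p] | ‖x‖ ≤ 1} = 1) (m : ℤ) :
    ν (pS p m) = ENNReal.ofReal ((p : ℝ) ^ (-m) - (p : ℝ) ^ (-(m + 1))) := by
  rw [pS_eq_diff, measure_diff (pB_succ_subset m) (pB_measurable (m + 1)).nullMeasurableSet
    (by rw [pB_measure ν hν hν1]; exact ofReal_ne_top),
    pB_measure ν hν hν1, pB_measure ν hν hν1,
    ENNReal.ofReal_sub _ (le_of_lt (zpow_pos pR_pos _))]

lemma val_eq_of_mem_pS {m : ℤ} {x : ℚ_[p]} (h : x ∈ pS p m) :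
    x ≠ 0 ∧ x.valuation = m := by
  have hx : x ≠ 0 := by
    intro h0
    rw [h0] at h
    simp only [pS, Set.mem_setOf_eq, norm_zero] at h
    exact absurd h.symm (ne_of_gt (zpow_pos pR_pos _))
  refine ⟨hx, ?_⟩
  have := (Padic.norm_eq_zpow_neg_valuation hx).symm.trans h
  have := zpow_right_injective₀ pR_pos (ne_of_gt one_lt_pR) this
  omega

lemma measurable_val : Measurable (Padic.valuation : ℚ_[p] → ℤ) := by
  apply measurable_to_countable'
  intro m
  have : (Padic.valuation : ℚ_[p] → ℤ) ⁻¹' {m}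
      = pS p m ∪ (if (0 : ℚ_[p]).valuation = m then ({0} : Set ℚ_[p]) else ∅) := by
    ext x
    by_cases hx : x = 0
    · subst hx
      simp only [Set.mem_preimage, Set.mem_singleton_iff, Set.mem_union]
      constructor
      · intro h
        right; rw [if_pos h]; rfl
      · rintro (h | h)
        · exact absurd (val_eq_of_mem_pS h).1 (by simp)
        · split_ifs at h with hc
          · exact hc
          · exact absurd h (Set.notMem_empty _)
    · simp only [Set.mem_preimage, Set.mem_singleton_iff, Set.mem_union]
      constructor
      · intro h
        left
        simp only [pS, Set.mem_setOf_eq]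
        rw [Padic.norm_eq_zpow_neg_valuation hx, h]
      · rintro (h | h)
        · exact (val_eq_of_mem_pS h).2
        · split_ifs at h with hc
          · exact absurd h hx
          · exact absurd h (Set.notMem_empty _)
  rw [this]
  refine (pS_measurable m).union ?_
  split_ifs
  · exact measurableSet_singleton 0
  · exact MeasurableSet.empty
set_option maxHeartbeats 1000000 in
/-- The summability criterion for the series `∑ |k0+k|^l r^k`. -/
lemma summable_aux (k0 : ℤ) (l : ℕ) {r : ℝ} (hr : 0 < r) :
    Summable (fun k : ℕ => |(k0 : ℝ) + k| ^ l * r ^ k) ↔ r < 1 := by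
  constructor
  · intro hs
    by_contra hge
    push_neg at hge
    have h0 := hs.tendsto_atTop_zero
    have hlt := h0.eventually_lt_const (one_pos)
    have hge1 : ∀ᶠ k : ℕ in Filter.atTop, (1 : ℝ) ≤ |(k0 : ℝ) + k| ^ l * r ^ k := by
      rw [Filter.eventually_atTop]
      refine ⟨(1 - k0).toNat, fun k hk => ?_⟩
      have hk1 : (1 : ℤ) - k0 ≤ (k : ℤ) := le_trans (Int.self_le_toNat _) (by exact_mod_cast hk)
      have h1 : (1 : ℝ) ≤ (k0 : ℝ) + k := by
        have : (1 : ℤ) ≤ k0 + k := by omega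
        exact_mod_cast this
      have h2 : (1 : ℝ) ≤ |(k0 : ℝ) + k| := le_trans h1 (le_abs_self _)
      calc (1 : ℝ) = 1 * 1 := (one_mul 1).symm
        _ ≤ |(k0 : ℝ) + k| ^ l * r ^ k :=
          mul_le_mul (one_le_pow₀ h2) (one_le_pow₀ hge) zero_le_one (by positivity)
    obtain ⟨k, hk1, hk2⟩ := (hlt.and hge1).exists
    exact absurd hk1 (not_lt.2 hk2)
  · intro hlt
    have h1 : Summable (fun m : ℕ => (m : ℝ) ^ l * r ^ m) :=
      summable_pow_mul_geometric_of_norm_lt_one l (by rwa [Real.norm_eq_abs, abs_of_pos hr])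
    have h2 : Summable (fun k : ℕ => ((k + 1 : ℕ) : ℝ) ^ l * r ^ (k + 1)) :=
      (summable_nat_add_iff 1).2 h1
    have h3 : Summable (fun k : ℕ => ((k : ℝ) + 1) ^ l * r ^ k) := by
      refine (h2.mul_left r⁻¹).congr fun k => ?_
      push_cast
      rw [pow_succ]
      field_simp
    refine ((h3.mul_left ((|(k0 : ℝ)| + 1) ^ l)).of_nonneg_of_le
      (fun k => by positivity) fun k => ?_)
    have hb : |(k0 : ℝ) + k| ≤ (|(k0 : ℝ)| + 1) * ((k : ℝ) + 1) := by
      have h4 : |(k0 : ℝ) + k| ≤ |(k0 : ℝ)| + k := by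
        refine le_trans (abs_add_le _ _) ?_
        simp [Nat.abs_cast]
      have h5 : (0 : ℝ) ≤ |(k0 : ℝ)| := abs_nonneg _
      have h6 : (0 : ℝ) ≤ (k : ℝ) := Nat.cast_nonneg k
      nlinarith
    calc |(k0 : ℝ) + k| ^ l * r ^ k
        ≤ ((|(k0 : ℝ)| + 1) * ((k : ℝ) + 1)) ^ l * r ^ k := by
          apply mul_le_mul_of_nonneg_right (pow_le_pow_left₀ (abs_nonneg _) hb l) (by positivity)
      _ = (|(k0 : ℝ)| + 1) ^ l * (((k : ℝ) + 1) ^ l * r ^ k) := by rw [mul_pow]; ring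
lemma U_eq (β : ℚ_[p]) (hβ : β ≠ 0) :
    {u : ℚ_[p] | 0 < ‖u‖ ∧ ‖u‖ < ‖β‖} = ⋃ k : ℕ, pS p (β.valuation + 1 + k) := by
  ext u
  simp only [Set.mem_setOf_eq, Set.mem_iUnion]
  constructor
  · rintro ⟨h1, h2⟩
    have hu : u ≠ 0 := by simpa using h1.ne'
    rw [Padic.norm_eq_zpow_neg_valuation hu, Padic.norm_eq_zpow_neg_valuation hβ] at h2
    have hv : β.valuation < u.valuation := by
      have := (zpow_lt_zpow_iff_right₀ one_lt_pR).1 h2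
      omega
    refine ⟨(u.valuation - (β.valuation + 1)).toNat, ?_⟩
    simp only [pS, Set.mem_setOf_eq]
    rw [Padic.norm_eq_zpow_neg_valuation hu]
    congr 1
    omega
  · rintro ⟨k, hk⟩
    obtain ⟨hu, hv⟩ := val_eq_of_mem_pS hk
    refine ⟨norm_pos_iff.2 hu, ?_⟩
    rw [Padic.norm_eq_zpow_neg_valuation hu, Padic.norm_eq_zpow_neg_valuation hβ]
    apply (zpow_lt_zpow_iff_right₀ one_lt_pR).2
    omega

lemma pS_disjoint (k0 : ℤ) :
    Pairwise (Function.onFun Disjoint fun k : ℕ => pS p (k0 + k)) := by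
  intro k k' hne
  refine Set.disjoint_left.2 fun x hx hx' => ?_
  have h1 := (val_eq_of_mem_pS hx).2
  have h2 := (val_eq_of_mem_pS hx').2
  apply hne
  omega

lemma key_pow (a n : ℤ) (hn : 0 < n) (m : ℤ) :
    (p : ℝ) ^ (-((a : ℝ) * m) / n) * (p : ℝ) ^ (-m)
      = ((p : ℝ) ^ (-((a : ℝ) + n) / (n : ℝ))) ^ m := by
  have hn0 : (n : ℝ) ≠ 0 := by exact_mod_cast hn.ne'
  rw [show ((p : ℝ) ^ (-m : ℤ)) = (p : ℝ) ^ ((-m : ℤ) : ℝ) from (Real.rpow_intCast _ _).symm,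
    ← Real.rpow_add pR_pos,
    show -((a : ℝ) * m) / n + ((-m : ℤ) : ℝ) = (-((a : ℝ) + n) / n) * ((m : ℤ) : ℝ) by
      push_cast; field_simp; ring,
    Real.rpow_mul (le_of_lt pR_pos), Real.rpow_intCast]

open ENNReal in
lemma lint_sphere (ν : Measure ℚ_[p]) (hν : ν.IsAddHaarMeasure)
    (hν1 : ν {x : ℚ_[p] | ‖x‖ ≤ 1} = 1) (a n : ℤ) (l : ℕ) (m : ℤ) :
    ∫⁻ u in pS p m, ENNReal.ofReal
        ‖(p : ℝ) ^ (-((a : ℝ) * (u.valuation : ℝ)) / (n : ℝ)) * (u.valuation : ℝ) ^ l‖ ∂ν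
      = ENNReal.ofReal (((p : ℝ) ^ (-((a : ℝ) * (m : ℝ)) / (n : ℝ)) * |(m : ℝ)| ^ l)
          * ((p : ℝ) ^ (-m) - (p : ℝ) ^ (-(m + 1)))) := by
  have hcong : ∫⁻ u in pS p m, ENNReal.ofReal
        ‖(p : ℝ) ^ (-((a : ℝ) * (u.valuation : ℝ)) / (n : ℝ)) * (u.valuation : ℝ) ^ l‖ ∂ν
      = ∫⁻ _u in pS p m,
          ENNReal.ofReal ((p : ℝ) ^ (-((a : ℝ) * (m : ℝ)) / (n : ℝ)) * |(m : ℝ)| ^ l) ∂ν := by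
    refine setLIntegral_congr_fun (pS_measurable m) (fun x hx => ?_)
    rw [(val_eq_of_mem_pS hx).2, Real.norm_eq_abs, abs_mul,
      abs_of_pos (Real.rpow_pos_of_pos pR_pos _), abs_pow]
  rw [hcong, setLIntegral_const, pS_measure ν hν hν1, ← ENNReal.ofReal_mul (by positivity)]

end IntCrit

open IntCrit

open PadicSub MeasureTheory in
/-- The integrability criterion used in the proof of Theorem 4.3 of the paper:
for `a ∈ ℤ`, `n > 0`, `l ≥ 0` and `β ∈ ℚ_p^×`, the function
`u ↦ p^{-a·v(u)/n} · v(u)^l` is absolutely integrable on `{u : 0 < |u| < |β|}` for the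
Haar measure if and only if `a + n > 0`. -/
theorem integrability_criterion_on_punctured_ball
    (p : ℕ) [Fact p.Prime] (a n : ℤ) (hn : 0 < n) (l : ℕ) (β : ℚ_[p]) (hβ : β ≠ 0)
    (ν : Measure ℚ_[p]) (hν : ν.IsAddHaarMeasure) (hν1 : ν {x : ℚ_[p] | ‖x‖ ≤ 1} = 1) :
    IntegrableOn
      (fun u : ℚ_[p] =>
        (p : ℝ) ^ (-((a : ℝ) * (u.valuation : ℝ)) / (n : ℝ)) * (u.valuation : ℝ) ^ l)
      {u : ℚ_[p] | 0 < ‖u‖ ∧ ‖u‖ < ‖β‖} ν ↔ 0 < a + n := by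
  have hp1 : (1 : ℝ) < p := one_lt_pR
  have hn' : (0 : ℝ) < n := by exact_mod_cast hn
  set k0 : ℤ := β.valuation + 1 with hk0
  set r : ℝ := (p : ℝ) ^ (-((a : ℝ) + n) / (n : ℝ)) with hrdef
  have hr_pos : 0 < r := Real.rpow_pos_of_pos pR_pos _
  set F : ℚ_[p] → ℝ := fun u =>
    (p : ℝ) ^ (-((a : ℝ) * (u.valuation : ℝ)) / (n : ℝ)) * (u.valuation : ℝ) ^ l with hF
  have mf : Measurable F :=
    (measurable_from_top
      (f := fun m : ℤ => (p : ℝ) ^ (-((a : ℝ) * (m : ℝ)) / (n : ℝ)) * (m : ℝ) ^ l)).comp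
      measurable_val
  rw [U_eq β hβ]
  have hiff1 : IntegrableOn F (⋃ k : ℕ, pS p (k0 + k)) ν ↔
      (∫⁻ u in ⋃ k : ℕ, pS p (k0 + k), ENNReal.ofReal ‖F u‖ ∂ν) < ∞ := by
    constructor
    · intro h
      exact (hasFiniteIntegral_iff_norm _).1 h.hasFiniteIntegral
    · intro h
      exact ⟨mf.aestronglyMeasurable, (hasFiniteIntegral_iff_norm _).2 h⟩
  rw [hiff1, lintegral_iUnion (fun k => pS_measurable _) (pS_disjoint k0)]
  set c : ℕ → ℝ := fun k =>
    ((p : ℝ) ^ (-((a : ℝ) * ((k0 + k : ℤ) : ℝ)) / (n : ℝ)) * |((k0 + k : ℤ) : ℝ)| ^ l)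
      * ((p : ℝ) ^ (-(k0 + k : ℤ)) - (p : ℝ) ^ (-((k0 + k : ℤ) + 1))) with hc
  have hterm : ∀ k : ℕ, (∫⁻ u in pS p (k0 + k), ENNReal.ofReal ‖F u‖ ∂ν)
      = ENNReal.ofReal (c k) := fun k => lint_sphere ν hν hν1 a n l (k0 + k)
  rw [tsum_congr hterm]
  have hsub_nonneg : ∀ m : ℤ, 0 ≤ (p : ℝ) ^ (-m) - (p : ℝ) ^ (-(m + 1)) := by
    intro m
    have := zpow_le_zpow_right₀ (le_of_lt hp1) (show -(m + 1) ≤ -m by omega)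
    linarith
  have hc_nonneg : ∀ k, 0 ≤ c k := by
    intro k
    have h1 : (0 : ℝ) < (p : ℝ) ^ (-((a : ℝ) * ((k0 + k : ℤ) : ℝ)) / (n : ℝ)) :=
      Real.rpow_pos_of_pos pR_pos _
    have h2 : (0 : ℝ) ≤ |((k0 + k : ℤ) : ℝ)| ^ l := by positivity
    exact mul_nonneg (by positivity) (hsub_nonneg _)
  have h2 : (∑' k, ENNReal.ofReal (c k)) < ∞ ↔ Summable c := by
    rw [lt_top_iff_ne_top,
      show (fun k => ENNReal.ofReal (c k)) = fun k => ((Real.toNNReal (c k) : ℝ≥0) : ℝ≥0∞)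
        from rfl,
      ENNReal.tsum_coe_ne_top_iff_summable, ← NNReal.summable_coe]
    constructor
    · intro h
      exact h.congr fun k => Real.coe_toNNReal _ (hc_nonneg k)
    · intro h
      exact h.congr fun k => (Real.coe_toNNReal _ (hc_nonneg k)).symm
  rw [h2]
  have hceq : ∀ k : ℕ, c k
      = ((1 - (p : ℝ)⁻¹) * r ^ k0) * (|(k0 : ℝ) + k| ^ l * r ^ k) := by
    intro k
    set m : ℤ := k0 + k with hm
    have e1 : (p : ℝ) ^ (-(m + 1)) = (p : ℝ) ^ (-m) * (p : ℝ)⁻¹ := by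
      rw [← zpow_neg_one, ← zpow_add₀ (ne_of_gt pR_pos)]
      ring_nf
    have e2 := key_pow (p := p) a n hn m
    have e3 : r ^ m = r ^ k0 * r ^ k := by
      rw [hm, zpow_add₀ (ne_of_gt hr_pos), zpow_natCast]
    have habs : |((m : ℤ) : ℝ)| = |(k0 : ℝ) + k| := by
      rw [hm]; push_cast; ring_nf
    calc c k = ((p : ℝ) ^ (-((a : ℝ) * ((m : ℤ) : ℝ)) / (n : ℝ)) * (p : ℝ) ^ (-m))
          * |((m : ℤ) : ℝ)| ^ l * (1 - (p : ℝ)⁻¹) := by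
          rw [hc]
          simp only [← hm]
          rw [e1]
          ring
      _ = r ^ m * |((m : ℤ) : ℝ)| ^ l * (1 - (p : ℝ)⁻¹) := by rw [e2]
      _ = ((1 - (p : ℝ)⁻¹) * r ^ k0) * (|(k0 : ℝ) + k| ^ l * r ^ k) := by
          rw [e3, habs]; ring
  have hpos : (0 : ℝ) < (1 - (p : ℝ)⁻¹) * r ^ k0 := by
    have : (p : ℝ)⁻¹ < 1 := inv_lt_one_of_one_lt₀ hp1
    have := zpow_pos hr_pos k0
    nlinarith
  rw [show c = fun k : ℕ => ((1 - (p : ℝ)⁻¹) * r ^ k0) * (|(k0 : ℝ) + (k : ℝ)| ^ l * r ^ k)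
    from funext hceq, summable_mul_left_iff (ne_of_gt hpos), summable_aux k0 l hr_pos, hrdef,
    show (1 : ℝ) = (p : ℝ) ^ (0 : ℝ) from (Real.rpow_zero _).symm,
    Real.rpow_lt_rpow_left_iff hp1, div_lt_iff₀ hn', zero_mul, neg_lt_zero]
  constructor
  · intro h
    exact_mod_cast h
  · intro h
    exact_mod_cast h
end
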